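/- arXiv:2206.01557 — 3 statements merged into one kernel-verified Lean document; each statement's English description precedes it below -/
import Mathlib

section
/- Let μ : {1,2,3,…} → {0,1} be a recurrent 0-1 word and let X be a factor-closed set of finite 0-1 words. If every finite induced subgraph of G_μ admits an induced embedding into G_w for some w ∈ X, then every finite factor of μ belongs to X. In particular, if μ' : {1,2,3,…} → {0,1} is another 0-1 word and every finite induced subgraph of G_μ admits an induced embedding into G_{μ'}, then Fac(μ) ⊆ Fac(μ'). -/
/-- Adjacency rule of the graph associated with a 0-1 word `μ` (letters indexed from 1):
for `i < j`, `{i,j}` is an edge iff (`μ j = 1` and `j = i+1`) or (`μ j = 0` and `j ≠ i+1`). -/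
def GmuAdj (μ : ℕ → Bool) (i j : ℕ) : Prop :=
  (i < j ∧ ((μ j = true ∧ j = i + 1) ∨ (μ j = false ∧ j ≠ i + 1))) ∨
  (j < i ∧ ((μ i = true ∧ i = j + 1) ∨ (μ i = false ∧ i ≠ j + 1)))

/-- The graph `G_μ` on `ℕ` associated with the 0-1 word `μ : {1,2,…} → {0,1}`. -/
def Gmu (μ : ℕ → Bool) : SimpleGraph ℕ where
  Adj i j := GmuAdj μ i j
  symm := ⟨fun i j h => Or.symm h⟩
  loopless := ⟨fun i h => by
    rcases h with ⟨h1, _⟩ | ⟨h1, _⟩ <;> exact lt_irrefl i h1⟩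

/-- Adjacency rule for the graph of a finite 0-1 word `w = w₁…wₙ` on vertices `{0,…,n}`. -/
def GWAdj (w : List Bool) (i j : ℕ) : Prop :=
  (i < j ∧ ((w.getD (j - 1) false = true ∧ j = i + 1) ∨
            (w.getD (j - 1) false = false ∧ j ≠ i + 1))) ∨
  (j < i ∧ ((w.getD (i - 1) false = true ∧ i = j + 1) ∨
            (w.getD (i - 1) false = false ∧ i ≠ j + 1)))

/-- The graph `G_w` of a finite 0-1 word `w = w₁…wₙ`, on the vertex set `{0,1,…,n}`. -/
def GW (w : List Bool) : SimpleGraph (Fin (w.length + 1)) where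
  Adj i j := GWAdj w i j
  symm := ⟨fun i j h => Or.symm h⟩
  loopless := ⟨fun i h => by
    rcases h with ⟨h1, _⟩ | ⟨h1, _⟩ <;> exact lt_irrefl (i : ℕ) h1⟩

/-- `M` is a module of the graph `G`: every vertex outside `M` is adjacent either to all
vertices of `M` or to none of them. -/
def IsModule {V : Type*} (G : SimpleGraph V) (M : Set V) : Prop :=
  ∀ x ∉ M, (∀ a ∈ M, G.Adj x a) ∨ (∀ a ∈ M, ¬ G.Adj x a)

/-- A graph is prime if its only modules are the empty set, singletons and the whole
vertex set. -/
def GraphPrime {V : Type*} (G : SimpleGraph V) : Prop :=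
  ∀ M : Set V, IsModule G M → M = ∅ ∨ (∃ a, M = {a}) ∨ M = Set.univ

/-- The set of finite factors of the 0-1 word `μ : {1,2,…} → {0,1}` (letters indexed
from 1). -/
def Fac1 (μ : ℕ → Bool) : Set (List Bool) :=
  {v | ∃ i : ℕ, v = (List.range v.length).map fun k => μ (i + 1 + k)}

/-- `μ` is recurrent: every finite factor occurs at infinitely many positions. -/
def Recurrent1 (μ : ℕ → Bool) : Prop :=
  ∀ v ∈ Fac1 μ, ∀ N : ℕ, ∃ i ≥ N, v = (List.range v.length).map fun k => μ (i + 1 + k)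

open Finset

lemma gmuAdj_lt {c : ℕ → Bool} {i j : ℕ} (h : i < j) :
    GmuAdj c i j ↔ ((c j = true ∧ j = i + 1) ∨ (c j = false ∧ j ≠ i + 1)) := by
  constructor
  · rintro (⟨-, h2⟩ | ⟨h1, -⟩)
    · exact h2
    · omega
  · intro h2; exact Or.inl ⟨h, h2⟩

lemma gmuAdj_symm {c : ℕ → Bool} {i j : ℕ} : GmuAdj c i j ↔ GmuAdj c j i :=
  ⟨Or.symm, Or.symm⟩

lemma gmuAdj_irrefl {c : ℕ → Bool} {i : ℕ} : ¬ GmuAdj c i i := by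
  rintro (⟨h, -⟩ | ⟨h, -⟩) <;> omega

lemma gmuAdj_succ {c : ℕ → Bool} {i : ℕ} : GmuAdj c i (i+1) ↔ c (i+1) = true := by
  rw [gmuAdj_lt (by omega)]
  constructor
  · rintro (⟨h, -⟩ | ⟨-, h⟩)
    · exact h
    · omega
  · intro h; exact Or.inl ⟨h, rfl⟩

lemma gmuAdj_far {c : ℕ → Bool} {i j : ℕ} (h : i + 2 ≤ j) : GmuAdj c i j ↔ c j = false := by
  rw [gmuAdj_lt (by omega)]
  constructor
  · rintro (⟨-, h2⟩ | ⟨h2, -⟩)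
    · omega
    · exact h2
  · intro h2; exact Or.inr ⟨h2, by omega⟩

lemma gmuAdj_ne {c : ℕ → Bool} {i j : ℕ} (h : GmuAdj c i j) : i ≠ j := by
  rintro rfl; exact gmuAdj_irrefl h

lemma gwAdj_lt {w : List Bool} {x y : ℕ} (h : x < y) :
    GWAdj w x y ↔ ((w.getD (y-1) false = true ∧ y = x + 1) ∨
      (w.getD (y-1) false = false ∧ y ≠ x + 1)) := by
  constructor
  · rintro (⟨-, h2⟩ | ⟨h1, -⟩)
    · exact h2
    · omega
  · intro h2; exact Or.inl ⟨h, h2⟩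

section WW
open scoped Classical
variable {m : ℕ} {c d : ℕ → Bool} {φ : ℕ → ℕ}

lemma lower_count_false (c : ℕ → Bool) {j : ℕ} (hj : 1 ≤ j) (hcj : c j = false) :
    ((range j).filter (fun i => GmuAdj c i j)).card = j - 1 := by
  have h : (range j).filter (fun i => GmuAdj c i j) = (range j).erase (j-1) := by
    ext i
    simp only [mem_filter, mem_range, mem_erase]
    constructor
    · rintro ⟨hi, hadj⟩
      rw [gmuAdj_lt hi] at hadj
      rcases hadj with ⟨h1, -⟩ | ⟨-, h2⟩
      · rw [hcj] at h1; cases h1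
      · exact ⟨by omega, hi⟩
    · rintro ⟨hne, hi⟩
      exact ⟨hi, (gmuAdj_lt hi).2 (Or.inr ⟨hcj, by omega⟩)⟩
  rw [h, card_erase_of_mem (by simp only [mem_range]; omega), card_range]

lemma lower_count_true (c : ℕ → Bool) {j : ℕ} (hj : 1 ≤ j) (hcj : c j = true) :
    ((range j).filter (fun i => GmuAdj c i j)).card = 1 := by
  have h : (range j).filter (fun i => GmuAdj c i j) = {j-1} := by
    ext i
    simp only [mem_filter, mem_range, mem_singleton]
    constructor
    · rintro ⟨hi, hadj⟩
      rw [gmuAdj_lt hi] at hadj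
      rcases hadj with ⟨-, h1⟩ | ⟨h2, -⟩
      · omega
      · rw [hcj] at h2; cases h2
    · rintro rfl
      refine ⟨by omega, (gmuAdj_lt (by omega)).2 (Or.inl ⟨hcj, by omega⟩)⟩
  rw [h, card_singleton]

noncomputable def epairs (c : ℕ → Bool) (m : ℕ) : Finset (ℕ × ℕ) :=
  ((range (m+1)) ×ˢ (range (m+1))).filter (fun p => p.1 < p.2 ∧ GmuAdj c p.1 p.2)

lemma epairs_card (c : ℕ → Bool) (m : ℕ) :
    (epairs c m).card = ∑ j ∈ Icc 1 m, (if c j = true then 1 else j - 1) := by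
  rw [card_eq_sum_card_fiberwise (f := fun p => p.2) (t := Icc 1 m) ?hmem]
  case hmem =>
    rintro ⟨i, j⟩ hp
    simp only [epairs, mem_coe, mem_filter, mem_product, mem_range] at hp
    simp only [mem_coe, mem_Icc]
    omega
  refine sum_congr rfl fun j hj => ?_
  rw [mem_Icc] at hj
  have himg : (epairs c m).filter (fun p => p.2 = j)
      = ((range j).filter (fun i => GmuAdj c i j)).image (fun i => (i, j)) := by
    ext ⟨x, y⟩
    simp only [epairs, mem_filter, mem_product, mem_range, mem_image]
    constructor
    · rintro ⟨⟨⟨hx, hy⟩, hlt, hadj⟩, rfl⟩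
      exact ⟨x, ⟨hlt, hadj⟩, rfl⟩
    · rintro ⟨i, ⟨hlt, hadj⟩, h⟩
      obtain ⟨rfl, rfl⟩ := Prod.mk.injEq .. ▸ h
      refine ⟨⟨⟨by omega, by omega⟩, hlt, hadj⟩, rfl⟩
  rw [himg, card_image_of_injective _ (fun a b hab => (Prod.mk.injEq ..▸ hab).1)]
  rcases hcj : c j with _|_
  · rw [lower_count_false c (by omega) hcj, if_neg (by simp [hcj])]
  · rw [lower_count_true c (by omega) hcj]; simp

lemma epairs_card_eq
    (hφle : ∀ j, j ≤ m → φ j ≤ m)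
    (hφinj : ∀ i, i ≤ m → ∀ j, j ≤ m → φ i = φ j → i = j)
    (hφsurj : ∀ t, t ≤ m → ∃ j, j ≤ m ∧ φ j = t)
    (hpres : ∀ i, i ≤ m → ∀ j, j ≤ m → (GmuAdj c i j ↔ GmuAdj d (φ i) (φ j))) :
    (epairs c m).card = (epairs d m).card := by
  refine card_bij (fun p _ => if φ p.1 < φ p.2 then (φ p.1, φ p.2) else (φ p.2, φ p.1))
    ?hmem ?hinj ?hsurj
  case hmem =>
    rintro ⟨i, j⟩ hp
    simp only [epairs, mem_filter, mem_product, mem_range] at hp ⊢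
    obtain ⟨⟨hi, hj⟩, hlt, hadj⟩ := hp
    have hadj' : GmuAdj d (φ i) (φ j) := (hpres i (by omega) j (by omega)).1 hadj
    have hne : φ i ≠ φ j := gmuAdj_ne hadj'
    have h1 := hφle i (by omega); have h2 := hφle j (by omega)
    split_ifs with hh
    · exact ⟨⟨by omega, by omega⟩, hh, hadj'⟩
    · exact ⟨⟨by omega, by omega⟩, by omega, gmuAdj_symm.1 hadj'⟩
  case hinj =>
    rintro ⟨i, j⟩ hp ⟨i', j'⟩ hp' heq
    simp only [epairs, mem_filter, mem_product, mem_range] at hp hp'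
    obtain ⟨⟨hi, hj⟩, hlt, -⟩ := hp
    obtain ⟨⟨hi', hj'⟩, hlt', -⟩ := hp'
    have e1 : i ≤ m := by omega
    have e2 : j ≤ m := by omega
    have e3 : i' ≤ m := by omega
    have e4 : j' ≤ m := by omega
    dsimp only at heq
    split_ifs at heq with h1 h2 h2 <;>
      obtain ⟨ha, hb⟩ := Prod.mk.injEq .. ▸ heq
    · rw [hφinj i e1 i' e3 ha, hφinj j e2 j' e4 hb]
    · rw [hφinj i e1 j' e4 ha, hφinj j e2 i' e3 hb] at hlt
      omega
    · rw [hφinj i e1 j' e4 hb, hφinj j e2 i' e3 ha] at hlt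
      omega
    · rw [hφinj i e1 i' e3 hb, hφinj j e2 j' e4 ha]
  case hsurj =>
    rintro ⟨x, y⟩ hb
    simp only [epairs, mem_filter, mem_product, mem_range] at hb
    obtain ⟨⟨hx, hy⟩, hlt, hadj⟩ := hb
    obtain ⟨i, hi, rfl⟩ := hφsurj x (by omega)
    obtain ⟨j, hj, rfl⟩ := hφsurj y (by omega)
    have hadjc : GmuAdj c i j := (hpres i hi j hj).2 hadj
    have hij : i ≠ j := gmuAdj_ne hadjc
    rcases lt_or_gt_of_ne hij with h | h
    · refine ⟨(i, j), ?_, ?_⟩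
      · simp only [epairs, mem_filter, mem_product, mem_range]
        exact ⟨⟨by omega, by omega⟩, h, hadjc⟩
      · dsimp only; rw [if_pos hlt]
    · refine ⟨(j, i), ?_, ?_⟩
      · simp only [epairs, mem_filter, mem_product, mem_range]
        exact ⟨⟨by omega, by omega⟩, h, gmuAdj_symm.1 hadjc⟩
      · dsimp only; rw [if_neg (by omega : ¬ (φ j < φ i))]


lemma count_eq
    (hφle : ∀ j, j ≤ m → φ j ≤ m)
    (hφinj : ∀ i, i ≤ m → ∀ j, j ≤ m → φ i = φ j → i = j)
    (hφsurj : ∀ t, t ≤ m → ∃ j, j ≤ m ∧ φ j = t)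
    (hpres : ∀ i, i ≤ m → ∀ j, j ≤ m → (GmuAdj c i j ↔ GmuAdj d (φ i) (φ j)))
    {t : ℕ} (ht3 : 3 ≤ t) (htm : t ≤ m)
    (idOn : ∀ j, t ≤ j → j ≤ m → φ j = j) :
    c t = d t ∧ φ (t-1) = t - 1 := by
  have hφt : φ t = t := idOn t le_rfl htm
  have hmapsto : ∀ i, i < t → φ i < t := by
    intro i hi
    by_contra hcon
    push_neg at hcon
    have h2 : φ (φ i) = φ i := idOn _ hcon (hφle i (by omega))
    have := hφinj (φ i) (hφle i (by omega)) i (by omega) h2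
    omega
  have hcards : ((range t).filter (fun i => GmuAdj c i t)).card
      = ((range t).filter (fun i => GmuAdj d i t)).card := by
    refine card_bij (fun i _ => φ i) ?_ ?_ ?_
    · intro i hi
      simp only [mem_filter, mem_range] at hi ⊢
      refine ⟨hmapsto i hi.1, ?_⟩
      have := (hpres i (by omega) t (by omega)).1 hi.2
      rwa [hφt] at this
    · intro i hi i' hi'
      simp only [mem_filter, mem_range] at hi hi'
      exact hφinj i (by omega) i' (by omega)
    · intro b hb
      simp only [mem_filter, mem_range] at hb
      obtain ⟨i, hi, rfl⟩ := hφsurj b (by omega)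
      have hit : i < t := by
        by_contra hcon
        push_neg at hcon
        rw [idOn i hcon hi] at hb
        omega
      refine ⟨i, ?_, rfl⟩
      simp only [mem_filter, mem_range]
      refine ⟨hit, ?_⟩
      have := (hpres i (by omega) t (by omega)).2
      rw [hφt] at this
      exact this hb.2
  have hct : c t = d t := by
    rcases h1 : c t with _|_ <;> rcases h2 : d t with _|_
    · rfl
    · rw [lower_count_false c (by omega) h1, lower_count_true d (by omega) h2] at hcards
      omega
    · rw [lower_count_true c (by omega) h1, lower_count_false d (by omega) h2] at hcards
      omega
    · rfl
  refine ⟨hct, ?_⟩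
  have hφt1 : φ (t-1) < t := hmapsto (t-1) (by omega)
  rcases h1 : c t with _|_
  · -- c t false: t-1 is the unique lower non-neighbour
    have hnadj : ¬ GmuAdj c (t-1) t := by
      rw [gmuAdj_lt (by omega), h1]
      rintro (⟨h, -⟩ | ⟨-, h⟩)
      · cases h
      · omega
    have : ¬ GmuAdj d (φ (t-1)) (φ t) :=
      fun h => hnadj ((hpres (t-1) (by omega) t (by omega)).2 h)
    rw [hφt, gmuAdj_lt (by omega), ← hct, h1] at this
    by_contra hcon
    exact this (Or.inr ⟨rfl, by omega⟩)
  · have hadj : GmuAdj c (t-1) t := by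
      have : (t-1) + 1 = t := by omega
      rw [← this] at h1 ⊢
      exact gmuAdj_succ.2 h1
    have : GmuAdj d (φ (t-1)) (φ t) :=
      (hpres (t-1) (by omega) t (by omega)).1 hadj
    rw [hφt, gmuAdj_lt (by omega), ← hct, h1] at this
    rcases this with ⟨-, h⟩ | ⟨h, -⟩
    · omega
    · cases h

lemma descent (hm : 8 ≤ m)
    (hφle : ∀ j, j ≤ m → φ j ≤ m)
    (hφinj : ∀ i, i ≤ m → ∀ j, j ≤ m → φ i = φ j → i = j)
    (hφsurj : ∀ t, t ≤ m → ∃ j, j ≤ m ∧ φ j = t)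
    (hpres : ∀ i, i ≤ m → ∀ j, j ≤ m → (GmuAdj c i j ↔ GmuAdj d (φ i) (φ j)))
    (hTm : φ m = m) (hTm1 : φ (m-1) = m-1) :
    ∀ j, 3 ≤ j → j ≤ m → c j = d j := by
  have key : ∀ k, k ≤ m - 2 → ∀ j, m - k ≤ j → j ≤ m → φ j = j := by
    intro k
    induction k with
    | zero => intro _ j h1 h2; have : j = m := by omega
              rw [this]; exact hTm
    | succ n ih =>
      intro hk j h1 h2
      rcases Nat.lt_or_ge j (m - n) with hj | hj
      · have hjeq : j = m - (n+1) := by omega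
        rcases Nat.eq_or_lt_of_le (Nat.one_le_iff_ne_zero.2 (by omega : n + 1 ≠ 0)) with h | h
        · -- n = 0 : j = m - 1
          have : j = m - 1 := by omega
          rw [this]; exact hTm1
        · -- n ≥ 1: use count_eq at t := m - n
          have ht3 : 3 ≤ m - n := by omega
          have := (count_eq hφle hφinj hφsurj hpres ht3 (by omega)
            (fun j' hj1 hj2 => ih (by omega) j' hj1 hj2)).2
          have heq : m - n - 1 = j := by omega
          rwa [heq] at this
      · exact ih (by omega) j hj h2
  intro j h3 hjm
  have idOn : ∀ i, j ≤ i → i ≤ m → φ i = i := by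
    intro i h1 h2
    exact key (m - j) (by omega) i (by omega) h2
  exact (count_eq hφle hφinj hφsurj hpres h3 hjm idOn).1


lemma cle {c : ℕ → Bool} {j : ℕ} (h : 2 ≤ j) : (if c j = true then 1 else j - 1) ≤ j - 1 := by
  rcases c j <;> simp <;> omega

lemma killA (hm : 8 ≤ m) {q : ℕ} (hq4 : 4 ≤ q) (hqm : q + 2 ≤ m) (hcq : c q = true)
    (hcm1 : c (m-1) = true) (hcm : c m = false)
    (hcnt : ∑ j ∈ Icc 1 m, (if c j = true then 1 else j - 1)
          = ∑ j ∈ Icc 1 m, (if d j = true then 1 else j - 1))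
    (hd1 : d 1 = true) (hdm1 : d (m-1) = false) (hdm : d m = true)
    (hdmid : ∀ j, 3 ≤ j → j + 2 ≤ m → d j = false) : False := by
  have hpt : ∀ j ∈ Icc 1 m,
      (if c j = true then 1 else j - 1) + ((if j = q then 2 else 0) + (if j = m-1 then m-3 else 0))
      ≤ (if d j = true then 1 else j - 1) + (if j = m then m-2 else 0) := by
    intro j hj
    rw [mem_Icc] at hj
    by_cases h1 : j = m
    · rw [h1, hcm, hdm, if_pos rfl, if_neg (show ¬ m = q by omega),
        if_neg (show ¬ m = m - 1 by omega)]
      simp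
      omega
    by_cases h2 : j = m-1
    · rw [h2, hcm1, hdm1, if_pos rfl, if_neg (show ¬ m - 1 = q by omega),
        if_neg (show ¬ m - 1 = m by omega)]
      simp
      omega
    by_cases h3 : j = q
    · rw [h3, hcq, hdmid q (by omega) hqm, if_pos rfl, if_neg (show ¬ q = m by omega),
        if_neg (show ¬ q = m - 1 by omega)]
      simp
      omega
    rw [if_neg h3, if_neg h2, if_neg h1]
    simp only [add_zero]
    by_cases h4 : j = 1
    · rw [h4, hd1]
      rcases h : c 1 <;> simp [h]
    by_cases h5 : j = 2
    · rw [h5]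
      rcases h : c 2 <;> rcases h' : d 2 <;> simp [h, h']
    · rw [hdmid j (by omega) (by omega)]
      simp only [Bool.false_eq_true, if_false]
      exact cle (by omega)
  have hsum := sum_le_sum hpt
  rw [sum_add_distrib, sum_add_distrib, sum_add_distrib] at hsum
  rw [Finset.sum_ite_eq' (Icc 1 m) q (fun _ => 2),
      Finset.sum_ite_eq' (Icc 1 m) (m-1) (fun _ => m-3),
      Finset.sum_ite_eq' (Icc 1 m) m (fun _ => m-2),
      if_pos (by rw [mem_Icc]; omega), if_pos (by rw [mem_Icc]; omega),
      if_pos (by rw [mem_Icc]; omega), hcnt] at hsum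
  omega

lemma killB (hm : 8 ≤ m) {q : ℕ} (hq4 : 4 ≤ q) (hqm : q + 2 ≤ m) (hcq : c q = true)
    (hcm1 : c (m-1) = true) (hcm : c m = false)
    (hcnt : ∑ j ∈ Icc 1 m, (if c j = true then 1 else j - 1)
          = ∑ j ∈ Icc 1 m, (if d j = true then 1 else j - 1))
    (hd1 : d 1 = true) (hdm1 : d (m-1) = true) (hdm : d m = false)
    (hdmid : ∀ j, 3 ≤ j → j + 2 ≤ m → d j = false) : False := by
  have hpt : ∀ j ∈ Icc 1 m,
      (if c j = true then 1 else j - 1) + (if j = q then 2 else 0)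
      ≤ (if d j = true then 1 else j - 1) := by
    intro j hj
    rw [mem_Icc] at hj
    by_cases h1 : j = m
    · rw [h1, hcm, hdm, if_neg (show ¬ m = q by omega)]
      simp
    by_cases h2 : j = m-1
    · rw [h2, hcm1, hdm1, if_neg (show ¬ m - 1 = q by omega)]
      simp
    by_cases h3 : j = q
    · rw [h3, hcq, hdmid q (by omega) hqm, if_pos rfl]
      simp
      omega
    rw [if_neg h3, add_zero]
    by_cases h4 : j = 1
    · rw [h4, hd1]
      rcases h : c 1 <;> simp [h]
    by_cases h5 : j = 2
    · rw [h5]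
      rcases h : c 2 <;> rcases h' : d 2 <;> simp [h, h']
    · rw [hdmid j (by omega) (by omega)]
      simp only [Bool.false_eq_true, if_false]
      exact cle (by omega)
  have hsum := sum_le_sum hpt
  rw [sum_add_distrib, Finset.sum_ite_eq' (Icc 1 m) q (fun _ => 2),
      if_pos (by rw [mem_Icc]; omega), hcnt] at hsum
  omega


lemma word_word (hm : 8 ≤ m)
    (hcm1 : c (m-1) = true) (hcm : c m = false)
    (hp : ∃ p, 3 ≤ p ∧ p + 2 ≤ m ∧ c p = false)
    (hq : ∃ q, 4 ≤ q ∧ q + 2 ≤ m ∧ c q = true)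
    (hφle : ∀ j, j ≤ m → φ j ≤ m)
    (hφinj : ∀ i, i ≤ m → ∀ j, j ≤ m → φ i = φ j → i = j)
    (hφsurj : ∀ t, t ≤ m → ∃ j, j ≤ m ∧ φ j = t)
    (hpres : ∀ i, i ≤ m → ∀ j, j ≤ m → (GmuAdj c i j ↔ GmuAdj d (φ i) (φ j))) :
    ∀ j, 3 ≤ j → j ≤ m → c j = d j := by
  obtain ⟨p, hp3, hpm, hcp⟩ := hp
  obtain ⟨q, hq4, hqm, hcq⟩ := hq
  have hcnt : ∑ j ∈ Icc 1 m, (if c j = true then 1 else j - 1)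
      = ∑ j ∈ Icc 1 m, (if d j = true then 1 else j - 1) := by
    rw [← epairs_card, ← epairs_card]
    exact epairs_card_eq hφle hφinj hφsurj hpres
  set Y := φ m with hYdef
  set U := φ (m-1) with hUdef
  set R := φ (m-2) with hRdef
  have hYle : Y ≤ m := hφle m le_rfl
  have hUle : U ≤ m := hφle (m-1) (by omega)
  have hRle : R ≤ m := hφle (m-2) (by omega)
  have hYU : Y ≠ U := fun h => by
    have := hφinj m le_rfl (m-1) (by omega) h; omega
  have hUR : U ≠ R := fun h => by
    have := hφinj (m-1) (by omega) (m-2) (by omega) h; omega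
  have hYR : Y ≠ R := fun h => by
    have := hφinj m le_rfl (m-2) (by omega) h; omega
  have imgDom : ∀ t, t ≤ m → t ≠ Y → t ≠ U → GmuAdj d Y t := by
    intro t ht h1 h2
    obtain ⟨j, hjle, rfl⟩ := hφsurj t ht
    have hj1 : j ≠ m := fun h => h1 (by rw [h])
    have hj2 : j ≠ m-1 := fun h => h2 (by rw [h])
    have hsrc : GmuAdj c m j :=
      gmuAdj_symm.1 ((gmuAdj_lt (show j < m by omega)).2 (Or.inr ⟨hcm, by omega⟩))
    exact (hpres m le_rfl j hjle).1 hsrc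
  have imgNotYU : ¬ GmuAdj d Y U := by
    intro h
    have h2 := gmuAdj_symm.1 ((hpres m le_rfl (m-1) (by omega)).2 h)
    rw [gmuAdj_lt (show m - 1 < m by omega)] at h2
    rcases h2 with ⟨h3, -⟩ | ⟨-, h3⟩
    · rw [hcm] at h3; cases h3
    · omega
  have imgPend : ∀ t, t ≤ m → (GmuAdj d U t ↔ t = R) := by
    intro t ht
    obtain ⟨j, hjle, rfl⟩ := hφsurj t ht
    constructor
    · intro h
      have hsrc := (hpres (m-1) (by omega) j hjle).2 h
      have hj : j = m - 2 := by
        rcases lt_trichotomy j (m-1) with hlt | heq | hgt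
        · rw [gmuAdj_symm, gmuAdj_lt hlt, hcm1] at hsrc
          rcases hsrc with ⟨-, h2⟩ | ⟨h2, -⟩
          · omega
          · cases h2
        · rw [heq] at hsrc; exact (gmuAdj_irrefl hsrc).elim
        · have hjm : j = m := by omega
          rw [hjm] at hsrc
          rw [gmuAdj_lt (show m - 1 < m by omega)] at hsrc
          rcases hsrc with ⟨h2, -⟩ | ⟨-, h2⟩
          · rw [hcm] at h2; cases h2
          · omega
      rw [hj]
    · intro h
      have hj : j = m - 2 := hφinj j hjle (m-2) (by omega) (by rw [h])
      subst hj
      have hsrc : GmuAdj c (m-1) (m-2) :=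
        gmuAdj_symm.1 ((gmuAdj_lt (show m - 2 < m - 1 by omega)).2
          (Or.inl ⟨hcm1, by omega⟩))
      exact (hpres (m-1) (by omega) (m-2) (by omega)).1 hsrc
  have pend2 : ∀ t1 t2, t1 ≤ m → t2 ≤ m → t1 ≠ t2 →
      GmuAdj d U t1 → GmuAdj d U t2 → False := by
    intro t1 t2 h1 h2 hne a1 a2
    rw [imgPend t1 h1] at a1
    rw [imgPend t2 h2] at a2
    exact hne (a1.trans a2.symm)
  have forceYU : ∀ t, t ≤ m → ¬ GmuAdj d Y t → t = Y ∨ t = U := by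
    intro t ht h
    by_contra hcon
    push_neg at hcon
    exact h (imgDom t ht hcon.1 hcon.2)
  have adj01 : GmuAdj d 0 1 ↔ d 1 = true := by
    have := gmuAdj_succ (c := d) (i := 0); simpa using this
  have adj12 : GmuAdj d 1 2 ↔ d 2 = true := by
    have := gmuAdj_succ (c := d) (i := 1); simpa using this
  rcases show Y = 0 ∨ Y = 1 ∨ 2 ≤ Y by omega with hY0 | hY1 | hY2
  · -- CASE Y = 0
    rcases hd1v : d 1 with _|_
    · -- d 1 = false : U = 1, pendant 1 has two nbrs
      have hU1 : U = 1 := by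
        have hna : ¬ GmuAdj d Y 1 := by
          rw [hY0]; rw [adj01, hd1v]; simp
        rcases forceYU 1 (by omega) hna with h | h
        · omega
        · omega
      have hblack : ∀ t, 2 ≤ t → t ≤ m → d t = false := by
        intro t h2 h3
        have := imgDom t h3 (by omega) (by omega)
        rw [hY0] at this
        exact (gmuAdj_far (by omega : 0 + 2 ≤ t)).1 this
      have n4 : GmuAdj d U 4 := by
        rw [hU1]
        exact (gmuAdj_far (by omega : 1 + 2 ≤ 4)).2 (hblack 4 (by omega) (by omega))
      have n5 : GmuAdj d U 5 := by
        rw [hU1]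
        exact (gmuAdj_far (by omega : 1 + 2 ≤ 5)).2 (hblack 5 (by omega) (by omega))
      exact (pend2 4 5 (by omega) (by omega) (by omega) n4 n5).elim
    · -- d 1 = true
      have hUne1 : U ≠ 1 := by
        intro h
        apply imgNotYU
        rw [hY0, h]
        exact adj01.2 hd1v
      have hU2 : 2 ≤ U := by
        have : U ≠ 0 := by rw [hY0] at hYU; exact fun h => hYU h.symm
        omega
      have hdU : d U = true := by
        by_contra hcon
        have hf : d U = false := by revert hcon; rcases d U <;> simp
        apply imgNotYU
        rw [hY0]
        exact (gmuAdj_far (by omega : 0 + 2 ≤ U)).2 hf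
      have hblack : ∀ t, 2 ≤ t → t ≤ m → t ≠ U → d t = false := by
        intro t h2 h3 hne
        have := imgDom t h3 (by omega) hne
        rw [hY0] at this
        exact (gmuAdj_far (by omega : 0 + 2 ≤ t)).1 this
      have nb1 : GmuAdj d U (U-1) := by
        have h0 : GmuAdj d (U-1) (U-1+1) := gmuAdj_succ.2 (by
          rw [show U-1+1 = U by omega]; exact hdU)
        rw [show U-1+1 = U by omega] at h0
        exact gmuAdj_symm.1 h0
      have hUge : m - 1 ≤ U := by
        by_contra hcon
        push_neg at hcon
        have nb2 : GmuAdj d U (U+2) :=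
          (gmuAdj_far (by omega : U + 2 ≤ U + 2)).2
            (hblack (U+2) (by omega) (by omega) (by omega))
        exact pend2 (U-1) (U+2) (by omega) (by omega) (by omega) nb1 nb2
      rcases show U = m ∨ U = m - 1 by omega with hUm | hUm1
      · exact (killA hm hq4 hqm hcq hcm1 hcm hcnt hd1v
          (hblack (m-1) (by omega) (by omega) (by omega))
          (by rw [← hUm]; exact hdU)
          (fun j hj3 hjm => hblack j (by omega) (by omega) (by omega))).elim
      · exact (killB hm hq4 hqm hcq hcm1 hcm hcnt hd1v
          (by rw [← hUm1]; exact hdU)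
          (hblack m (by omega) le_rfl (by omega))
          (fun j hj3 hjm => hblack j (by omega) (by omega) (by omega))).elim
  · -- CASE Y = 1
    rcases hd1v : d 1 with _|_
    · -- d 1 = false : U = 0
      have hU0 : U = 0 := by
        have hna : ¬ GmuAdj d Y 0 := by
          rw [hY1]
          intro h
          have h2 : GmuAdj d 0 1 := gmuAdj_symm.1 h
          rw [adj01, hd1v] at h2
          cases h2
        rcases forceYU 0 (by omega) hna with h | h
        · omega
        · omega
      have hblack : ∀ t, 3 ≤ t → t ≤ m → d t = false := by
        intro t h3 h4
        have := imgDom t h4 (by omega) (by omega)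
        rw [hY1] at this
        exact (gmuAdj_far (by omega : 1 + 2 ≤ t)).1 this
      have n4 : GmuAdj d U 4 := by
        rw [hU0]
        exact (gmuAdj_far (by omega : 0 + 2 ≤ 4)).2 (hblack 4 (by omega) (by omega))
      have n5 : GmuAdj d U 5 := by
        rw [hU0]
        exact (gmuAdj_far (by omega : 0 + 2 ≤ 5)).2 (hblack 5 (by omega) (by omega))
      exact (pend2 4 5 (by omega) (by omega) (by omega) n4 n5).elim
    · -- d 1 = true
      have hUne0 : U ≠ 0 := by
        intro h
        apply imgNotYU
        rw [hY1, h]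
        exact gmuAdj_symm.1 (adj01.2 hd1v)
      rcases hd2v : d 2 with _|_
      · -- d 2 = false: U = 2
        have hU2 : U = 2 := by
          have hna : ¬ GmuAdj d Y 2 := by
            rw [hY1, adj12, hd2v]; simp
          rcases forceYU 2 (by omega) hna with h | h
          · omega
          · omega
        have hblack : ∀ t, 3 ≤ t → t ≤ m → d t = false := by
          intro t h3 h4
          have := imgDom t h4 (by omega) (by omega)
          rw [hY1] at this
          exact (gmuAdj_far (by omega : 1 + 2 ≤ t)).1 this
        have n0 : GmuAdj d U 0 := by
          rw [hU2]
          exact gmuAdj_symm.1 ((gmuAdj_far (by omega : 0 + 2 ≤ 2)).2 hd2v)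
        have n4 : GmuAdj d U 4 := by
          rw [hU2]
          exact (gmuAdj_far (by omega : 2 + 2 ≤ 4)).2 (hblack 4 (by omega) (by omega))
        exact (pend2 0 4 (by omega) (by omega) (by omega) n0 n4).elim
      · -- d 2 = true : U ≥ 3 white
        have hUne2 : U ≠ 2 := by
          intro h
          apply imgNotYU
          rw [hY1, h]
          exact adj12.2 hd2v
        have hU3 : 3 ≤ U := by
          have : U ≠ 1 := by rw [hY1] at hYU; exact fun h => hYU h.symm
          omega
        have hdU : d U = true := by
          by_contra hcon
          have hf : d U = false := by revert hcon; rcases d U <;> simp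
          apply imgNotYU
          rw [hY1]
          exact (gmuAdj_far (by omega : 1 + 2 ≤ U)).2 hf
        have hblack : ∀ t, 3 ≤ t → t ≤ m → t ≠ U → d t = false := by
          intro t h3 h4 hne
          have := imgDom t h4 (by omega) hne
          rw [hY1] at this
          exact (gmuAdj_far (by omega : 1 + 2 ≤ t)).1 this
        have nb1 : GmuAdj d U (U-1) := by
          have h0 : GmuAdj d (U-1) (U-1+1) := gmuAdj_succ.2 (by
            rw [show U-1+1 = U by omega]; exact hdU)
          rw [show U-1+1 = U by omega] at h0
          exact gmuAdj_symm.1 h0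
        have hUge : m - 1 ≤ U := by
          by_contra hcon
          push_neg at hcon
          have nb2 : GmuAdj d U (U+2) :=
            (gmuAdj_far (by omega : U + 2 ≤ U + 2)).2
              (hblack (U+2) (by omega) (by omega) (by omega))
          exact pend2 (U-1) (U+2) (by omega) (by omega) (by omega) nb1 nb2
        rcases show U = m ∨ U = m - 1 by omega with hUm | hUm1
        · exact (killA hm hq4 hqm hcq hcm1 hcm hcnt hd1v
            (hblack (m-1) (by omega) (by omega) (by omega))
            (by rw [← hUm]; exact hdU)
            (fun j hj3 hjm => hblack j (by omega) (by omega) (by omega))).elim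
        · exact (killB hm hq4 hqm hcq hcm1 hcm hcnt hd1v
            (by rw [← hUm1]; exact hdU)
            (hblack m (by omega) le_rfl (by omega))
            (fun j hj3 hjm => hblack j (by omega) (by omega) (by omega))).elim
  · -- CASE 2 ≤ Y
    rcases hdYv : d Y with _|_
    · -- d Y = false : U = Y - 1
      have hU : U = Y - 1 := by
        have hna : ¬ GmuAdj d Y (Y-1) := by
          intro h
          have h2 := gmuAdj_symm.1 h
          have h3 : GmuAdj d (Y-1) (Y-1+1) := by rw [show Y-1+1 = Y by omega]; exact h2
          rw [gmuAdj_succ, show Y-1+1 = Y by omega, hdYv] at h3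
          cases h3
        rcases forceYU (Y-1) (by omega) hna with h | h
        · omega
        · omega
      have hup2 : ∀ t, Y + 2 ≤ t → t ≤ m → d t = false := by
        intro t h1 h2
        have := imgDom t h2 (by omega) (by omega)
        exact (gmuAdj_far (by omega : Y + 2 ≤ t)).1 this
      by_cases hY3 : 3 ≤ Y
      · rcases hdY1v : d (Y-1) with _|_
        · -- d (Y-1) = false: U has nbr 0 and another
          have n0 : GmuAdj d U 0 := by
            rw [hU]
            exact gmuAdj_symm.1 ((gmuAdj_far (by omega : 0 + 2 ≤ Y - 1)).2 hdY1v)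
          by_cases hY4 : 4 ≤ Y
          · have n1 : GmuAdj d U 1 := by
              rw [hU]
              exact gmuAdj_symm.1 ((gmuAdj_far (by omega : 1 + 2 ≤ Y - 1)).2 hdY1v)
            exact (pend2 0 1 (by omega) (by omega) (by omega) n0 n1).elim
          · -- Y = 3, U = 2
            have hYm : Y + 2 ≤ m := by omega
            have n5 : GmuAdj d U (Y+2) := by
              rw [hU]
              exact (gmuAdj_far (by omega : Y - 1 + 2 ≤ Y + 2)).2
                (hup2 (Y+2) le_rfl hYm)
            exact (pend2 0 (Y+2) (by omega) (by omega) (by omega) n0 n5).elim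
        · -- d (Y-1) = true : R = Y-2, and Y ≥ m-1
          have nb1 : GmuAdj d U (Y-2) := by
            have h0 : GmuAdj d (Y-2) (Y-2+1) := gmuAdj_succ.2 (by
              rw [show Y-2+1 = Y-1 by omega]; exact hdY1v)
            rw [show Y-2+1 = Y-1 by omega, ← hU] at h0
            exact gmuAdj_symm.1 h0
          have hYge : m - 1 ≤ Y := by
            by_contra hcon
            push_neg at hcon
            have nb2 : GmuAdj d U (Y+2) := by
              rw [hU]
              exact (gmuAdj_far (by omega : Y - 1 + 2 ≤ Y + 2)).2
                (hup2 (Y+2) le_rfl (by omega))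
            exact pend2 (Y-2) (Y+2) (by omega) (by omega) (by omega) nb1 nb2
          rcases show Y = m ∨ Y = m - 1 by omega with hYm | hYm1
          · -- T1 : the good case
            exact descent hm hφle hφinj hφsurj hpres
              (by rw [← hYdef]; exact hYm) (by rw [← hUdef, hU, hYm])
          · -- T2 : kill via unique pendant in source
            have hdm : d m = true := by
              have := imgDom m le_rfl (by omega) (by omega)
              have h2 : GmuAdj d (m-1) m := by rw [← hYm1]; exact this
              have h3 : GmuAdj d (m-1) (m-1+1) := by rw [show m-1+1 = m by omega]; exact h2
              rw [gmuAdj_succ, show m-1+1 = m by omega] at h3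
              exact h3
            obtain ⟨j0, hj0le, hj0⟩ := hφsurj m le_rfl
            have hj0a : j0 ≠ m := by
              intro h; rw [h] at hj0
              rw [← hYdef] at hj0; omega
            have hj0b : j0 ≠ m - 1 := by
              intro h; rw [h] at hj0
              rw [← hUdef] at hj0; omega
            have huniq : ∀ i, i ≤ m → GmuAdj c j0 i → i = m := by
              intro i hile hadj
              have himg : GmuAdj d m (φ i) := by
                rw [← hj0]; exact (hpres j0 hj0le i hile).1 hadj
              have hles : φ i ≤ m := hφle i hile
              have hne : m ≠ φ i := gmuAdj_ne himg
              have hlt : φ i < m := by omega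
              have h2 := gmuAdj_symm.1 himg
              rw [gmuAdj_lt hlt] at h2
              rcases h2 with ⟨-, h3⟩ | ⟨h3, -⟩
              · -- φ i = m - 1 = Y = φ m
                have : φ i = φ m := by rw [← hYdef]; omega
                exact hφinj i hile m le_rfl this
              · rw [hdm] at h3; cases h3
            have hj0le2 : j0 + 2 ≤ m := by omega
            rcases hcj0 : c j0 with _|_
            · by_cases hj02 : 2 ≤ j0
              · have hn : GmuAdj c j0 0 :=
                  gmuAdj_symm.1 ((gmuAdj_far (by omega : 0 + 2 ≤ j0)).2 hcj0)
                have := huniq 0 (by omega) hn; omega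
              · have hn : GmuAdj c j0 p := (gmuAdj_far (by omega : j0 + 2 ≤ p)).2 hcp
                have := huniq p (by omega) hn; omega
            · by_cases hj01 : 1 ≤ j0
              · have hn : GmuAdj c j0 (j0-1) := by
                  have h0 : GmuAdj c (j0-1) (j0-1+1) := gmuAdj_succ.2 (by
                    rw [show j0-1+1 = j0 by omega]; exact hcj0)
                  rw [show j0-1+1 = j0 by omega] at h0
                  exact gmuAdj_symm.1 h0
                have := huniq (j0-1) (by omega) hn; omega
              · have hj00 : j0 = 0 := by omega
                have hn : GmuAdj c j0 p := by
                  rw [hj00]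
                  exact (gmuAdj_far (by omega : 0 + 2 ≤ p)).2 hcp
                have := huniq p (by omega) hn; omega
      · -- Y = 2, U = 1
        have hY2e : Y = 2 := by omega
        have hblack : ∀ t, 4 ≤ t → t ≤ m → d t = false := by
          intro t h1 h2
          exact hup2 t (by omega) h2
        have n4 : GmuAdj d U 4 := by
          rw [hU, hY2e]
          exact (gmuAdj_far (by omega : 1 + 2 ≤ 4)).2 (hblack 4 (by omega) (by omega))
        have n5 : GmuAdj d U 5 := by
          rw [hU, hY2e]
          exact (gmuAdj_far (by omega : 1 + 2 ≤ 5)).2 (hblack 5 (by omega) (by omega))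
        exact (pend2 4 5 (by omega) (by omega) (by omega) n4 n5).elim
    · -- d Y = true : U = Y - 2, then Y = 2 and dead
      have hU : U = Y - 2 := by
        have hna : ¬ GmuAdj d Y (Y-2) := by
          intro h
          have h2 := gmuAdj_symm.1 h
          rw [(gmuAdj_far (by omega : Y - 2 + 2 ≤ Y)), hdYv] at h2
          cases h2
        rcases forceYU (Y-2) (by omega) hna with h | h
        · omega
        · omega
      have hY2e : Y = 2 := by
        by_contra hcon
        have hY3 : 3 ≤ Y := by omega
        have hna : ¬ GmuAdj d Y (Y-3) := by
          intro h
          have h2 := gmuAdj_symm.1 h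
          rw [(gmuAdj_far (by omega : Y - 3 + 2 ≤ Y)), hdYv] at h2
          cases h2
        rcases forceYU (Y-3) (by omega) hna with h | h
        · omega
        · omega
      have hblack : ∀ t, 4 ≤ t → t ≤ m → d t = false := by
        intro t h1 h2
        have := imgDom t h2 (by omega) (by omega)
        rw [hY2e] at this
        exact (gmuAdj_far (by omega : 2 + 2 ≤ t)).1 this
      have n4 : GmuAdj d U 4 := by
        rw [hU, hY2e]
        exact (gmuAdj_far (by omega : 0 + 2 ≤ 4)).2 (hblack 4 (by omega) (by omega))
      have n5 : GmuAdj d U 5 := by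
        rw [hU, hY2e]
        exact (gmuAdj_far (by omega : 0 + 2 ≤ 5)).2 (hblack 5 (by omega) (by omega))
      exact (pend2 4 5 (by omega) (by omega) (by omega) n4 n5).elim


lemma prime_word (hm : 8 ≤ m)
    (hcm1 : c (m-1) = true) (hcm : c m = false)
    {q : ℕ} (hq4 : 4 ≤ q) (hqm : q + 2 ≤ m) (hcq : c q = true)
    (M : Finset ℕ) (hMle : ∀ x ∈ M, x ≤ m) (hM2 : 2 ≤ M.card) (hMm : M.card ≤ m)
    (hmod : ∀ z, z ≤ m → z ∉ M → ∀ a ∈ M, ∀ b ∈ M, (GmuAdj c z a ↔ GmuAdj c z b)) :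
    False := by
  have hne : M.Nonempty := card_pos.1 (by omega)
  set y := M.max' hne with hydef
  have hyM : y ∈ M := M.max'_mem hne
  have hytop : ∀ x ∈ M, x ≤ y := fun x hx => M.le_max' x hx
  have hym : y = m := by
    by_contra hcon
    have hylt : y < m := lt_of_le_of_ne (hMle y hyM) hcon
    have hzn : y + 1 ∉ M := fun h => by have := hytop _ h; omega
    obtain ⟨x, hxM, hxy⟩ := Finset.exists_mem_ne (s := M) (by omega) y
    have hxlt : x < y := lt_of_le_of_ne (hytop x hxM) hxy
    have h1 := hmod (y+1) (by omega) hzn y hyM x hxM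
    have hA : GmuAdj c (y+1) y ↔ c (y+1) = true := by
      rw [gmuAdj_symm]; exact gmuAdj_succ
    have hB : GmuAdj c (y+1) x ↔ c (y+1) = false := by
      rw [gmuAdj_symm]; exact gmuAdj_far (by omega)
    rw [hA, hB] at h1
    rcases hv : c (y+1) with _|_
    · have h2 := h1.2 hv; rw [hv] at h2; cases h2
    · have h2 := h1.1 hv; rw [hv] at h2; cases h2
  have hmM : m ∈ M := hym ▸ hyM
  have hM'ne : (M.erase m).Nonempty := by
    rw [← card_pos, card_erase_of_mem hmM]; omega
  set x2 := (M.erase m).max' hM'ne with hx2def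
  have hx2e : x2 ∈ M.erase m := (M.erase m).max'_mem hM'ne
  have hx2M : x2 ∈ M := (mem_erase.1 hx2e).2
  have hx2nm : x2 ≠ m := (mem_erase.1 hx2e).1
  have hx2le : x2 ≤ m := hMle x2 hx2M
  have hx2top : ∀ x ∈ M, x ≠ m → x ≤ x2 := fun x hx hne' =>
    (M.erase m).le_max' x (mem_erase.2 ⟨hne', hx⟩)
  by_cases hcase : x2 = m - 1
  · -- P2
    have hsub : ∀ z, z ≤ m - 3 → z ∈ M := by
      intro z hz
      by_contra hzn
      have h1 := hmod z (by omega) hzn m hmM (m-1) (by rw [← hcase]; exact hx2M)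
      have hA : GmuAdj c z m := (gmuAdj_far (by omega)).2 hcm
      have hB : ¬ GmuAdj c z (m-1) := by
        rw [gmuAdj_lt (show z < m - 1 by omega)]
        rintro (⟨-, h⟩ | ⟨h, -⟩)
        · omega
        · rw [hcm1] at h; cases h
      exact hB (h1.1 hA)
    have hm2n : m - 2 ∉ M := by
      intro hin
      have hsub2 : range (m+1) ⊆ M := by
        intro z hz
        rw [mem_range] at hz
        rcases show z ≤ m - 3 ∨ z = m-2 ∨ z = m-1 ∨ z = m by omega with h|h|h|h
        · exact hsub z h
        · rw [h]; exact hin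
        · rw [h, ← hcase]; exact hx2M
        · rw [h]; exact hmM
      have := card_le_card hsub2
      rw [card_range] at this
      omega
    have h1 := hmod (m-2) (by omega) hm2n (m-3) (hsub _ (by omega)) (m-4) (hsub _ (by omega))
    have hA : GmuAdj c (m-2) (m-3) ↔ c (m-2) = true := by
      rw [gmuAdj_symm]
      have h0 := gmuAdj_succ (c := c) (i := m-3)
      rw [show m-3+1 = m-2 by omega] at h0
      exact h0
    have hB : GmuAdj c (m-2) (m-4) ↔ c (m-2) = false := by
      rw [gmuAdj_symm]
      exact gmuAdj_far (c := c) (show m-4+2 ≤ m-2 by omega)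
    rw [hA, hB] at h1
    rcases hv : c (m-2) with _|_
    · have h2 := h1.2 hv; rw [hv] at h2; cases h2
    · have h2 := h1.1 hv; rw [hv] at h2; cases h2
  · -- P3
    have hx2a : x2 ≠ m - 2 := by
      intro he
      have hzn : m - 1 ∉ M := fun h => by have := hx2top (m-1) h (by omega); omega
      have h1 := hmod (m-1) (by omega) hzn m hmM x2 hx2M
      have hA : ¬ GmuAdj c (m-1) m := by
        rw [gmuAdj_lt (by omega)]
        rintro (⟨h, -⟩ | ⟨-, h⟩)
        · rw [hcm] at h; cases h
        · omega
      have hB : GmuAdj c (m-1) x2 := by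
        rw [he]
        have h0 : GmuAdj c (m-2) (m-2+1) := gmuAdj_succ.2 (by
          rw [show m-2+1 = m-1 by omega]; exact hcm1)
        rw [show m-2+1 = m-1 by omega] at h0
        exact gmuAdj_symm.1 h0
      exact hA (h1.2 hB)
    have hx2c : x2 + 3 ≤ m := by omega
    have hMeq : ∀ x ∈ M, x = x2 ∨ x = m := by
      intro x hx
      by_contra hcon
      push_neg at hcon
      have hxlt : x < x2 := lt_of_le_of_ne (hx2top x hx hcon.2) hcon.1
      have hzn : x2 + 1 ∉ M := fun h => by have := hx2top (x2+1) h (by omega); omega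
      have h1 := hmod (x2+1) (by omega) hzn x2 hx2M x hx
      have h2 := hmod (x2+1) (by omega) hzn m hmM x hx
      have hA : GmuAdj c (x2+1) x2 ↔ c (x2+1) = true := by
        rw [gmuAdj_symm]; exact gmuAdj_succ
      have hB : GmuAdj c (x2+1) x ↔ c (x2+1) = false := by
        rw [gmuAdj_symm]; exact gmuAdj_far (by omega)
      have hC : GmuAdj c (x2+1) m := (gmuAdj_far (by omega)).2 hcm
      have e1 := hB.1 (h2.1 hC)
      have e2 := hA.1 (h1.2 (h2.1 hC))
      rw [e1] at e2; cases e2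
    by_cases hqx : x2 + 2 ≤ q
    · have hqn : q ∉ M := by
        intro h; rcases hMeq q h with h'|h' <;> omega
      have h1 := hmod q (by omega) hqn m hmM x2 hx2M
      have hA : GmuAdj c q m := (gmuAdj_far (show q + 2 ≤ m by omega)).2 hcm
      have e1 := (gmuAdj_far (show x2 + 2 ≤ q by omega)).1 (gmuAdj_symm.1 (h1.1 hA))
      rw [hcq] at e1; cases e1
    · have hx2ge : 3 ≤ x2 := by omega
      have hn1 : x2 - 1 ∉ M := by intro h; rcases hMeq _ h with h'|h' <;> omega
      have hn2 : x2 - 2 ∉ M := by intro h; rcases hMeq _ h with h'|h' <;> omega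
      have h1 := hmod (x2-1) (by omega) hn1 m hmM x2 hx2M
      have h2 := hmod (x2-2) (by omega) hn2 m hmM x2 hx2M
      have hA1 : GmuAdj c (x2-1) m := (gmuAdj_far (by omega)).2 hcm
      have hA2 : GmuAdj c (x2-2) m := (gmuAdj_far (by omega)).2 hcm
      have hB1 : GmuAdj c (x2-1) x2 ↔ c x2 = true := by
        have h0 := gmuAdj_succ (c := c) (i := x2-1)
        rw [show x2-1+1 = x2 by omega] at h0
        exact h0
      have hB2 : GmuAdj c (x2-2) x2 ↔ c x2 = false := by
        have h0 := gmuAdj_far (c := c) (show x2-2+2 ≤ x2 by omega)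
        exact h0
      have e1 := hB1.1 (h1.1 hA1)
      have e2 := hB2.1 (h2.1 hA2)
      rw [e1] at e2; cases e2


lemma gwAdj_eq_gmuAdj (w : List Bool) :
    GWAdj w = GmuAdj (fun y => w.getD (y-1) false) := rfl

lemma core_mixed {w : List Bool} {f : ℕ → ℕ}
    (hm : 8 ≤ m)
    (hcm1 : c (m-1) = true) (hcm : c m = false)
    (hp : ∃ p, 3 ≤ p ∧ p + 2 ≤ m ∧ c p = false)
    (hq : ∃ q, 4 ≤ q ∧ q + 2 ≤ m ∧ c q = true)
    (hfle : ∀ j, j ≤ m → f j ≤ w.length)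
    (hfinj : ∀ i, i ≤ m → ∀ j, j ≤ m → f i = f j → i = j)
    (hfadj : ∀ i, i ≤ m → ∀ j, j ≤ m → (GmuAdj c i j ↔ GWAdj w (f i) (f j))) :
    ∃ a, 1 ≤ a ∧ a + m ≤ w.length + 1 ∧
      ∀ j, 3 ≤ j → j ≤ m → w.getD (a + j - 2) false = c j := by
  classical
  obtain ⟨q, hq4, hqm, hcq⟩ := hq
  set ω : ℕ → Bool := fun y => w.getD (y-1) false with hωdef
  have hE : ∀ i, i ≤ m → ∀ j, j ≤ m → (GmuAdj c i j ↔ GmuAdj ω (f i) (f j)) := by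
    intro i hi j hj
    rw [← gwAdj_eq_gmuAdj]
    exact hfadj i hi j hj
  set Im := (range (m+1)).image f with hImdef
  have hmemIm : ∀ j, j ≤ m → f j ∈ Im := by
    intro j hj
    exact mem_image.2 ⟨j, mem_range.2 (by omega), rfl⟩
  have hImel : ∀ x ∈ Im, ∃ j, j ≤ m ∧ f j = x := by
    intro x hx
    obtain ⟨j, hj, rfl⟩ := mem_image.1 hx
    exact ⟨j, by rw [mem_range] at hj; omega, rfl⟩
  have hcardIm : Im.card = m + 1 := by
    rw [hImdef, card_image_of_injOn, card_range]
    intro i hi j hj hij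
    rw [mem_coe, mem_range] at hi hj
    exact hfinj i (by omega) j (by omega) hij
  have hgap : ∀ x ∈ Im, (∃ l ∈ Im, l < x) → (∃ u ∈ Im, x < u) → x + 1 ∈ Im := by
    rintro x hx ⟨l, hl, hll⟩ ⟨u, hu, hul⟩
    by_contra hx1
    obtain ⟨jx, hjx, hfx⟩ := hImel x hx
    obtain ⟨jl, hjl, hfl⟩ := hImel l hl
    obtain ⟨ju, hju, hfu⟩ := hImel u hu
    set M := (range (m+1)).filter (fun j => f j ≤ x) with hMdef
    have hMle : ∀ z ∈ M, z ≤ m := by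
      intro z hz
      rw [hMdef, mem_filter, mem_range] at hz
      omega
    have hMmem : ∀ z, z ∈ M ↔ (z ≤ m ∧ f z ≤ x) := by
      intro z
      rw [hMdef, mem_filter, mem_range]
      constructor
      · rintro ⟨h1, h2⟩; exact ⟨by omega, h2⟩
      · rintro ⟨h1, h2⟩; exact ⟨by omega, h2⟩
    have hM2 : 2 ≤ M.card := by
      have hsub : ({jl, jx} : Finset ℕ) ⊆ M := by
        intro z hz
        rw [mem_insert, mem_singleton] at hz
        rcases hz with rfl | rfl
        · exact (hMmem z).2 ⟨hjl, by omega⟩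
        · exact (hMmem z).2 ⟨hjx, by omega⟩
      have hcard2 : ({jl, jx} : Finset ℕ).card = 2 := by
        rw [card_insert_of_notMem (by
          rw [mem_singleton]
          intro h
          rw [h] at hfl
          omega), card_singleton]
      calc 2 = ({jl, jx} : Finset ℕ).card := hcard2.symm
        _ ≤ M.card := card_le_card hsub
    have hMm : M.card ≤ m := by
      have hsub : M ⊆ (range (m+1)).erase ju := by
        intro z hz
        obtain ⟨hzm, hzx⟩ := (hMmem z).1 hz
        rw [mem_erase, mem_range]
        refine ⟨?_, by omega⟩
        intro h
        rw [h, hfu] at hzx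
        omega
      have h2 := card_le_card hsub
      rw [card_erase_of_mem (mem_range.2 (by omega)), card_range] at h2
      omega
    refine prime_word hm hcm1 hcm hq4 hqm hcq M hMle hM2 hMm ?_
    intro z hzm hzn b1 hb1 b2 hb2
    have hfz : x + 2 ≤ f z := by
      have h1 : ¬ (f z ≤ x) := fun h => hzn ((hMmem z).2 ⟨hzm, h⟩)
      have h2 : f z ≠ x + 1 := by
        intro h
        exact hx1 (h ▸ hmemIm z hzm)
      omega
    obtain ⟨h1m, h1x⟩ := (hMmem b1).1 hb1
    obtain ⟨h2m, h2x⟩ := (hMmem b2).1 hb2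
    rw [hE z hzm b1 h1m, hE z hzm b2 h2m]
    have k1 : GmuAdj ω (f z) (f b1) ↔ ω (f z) = false := by
      rw [gmuAdj_symm]; exact gmuAdj_far (by omega)
    have k2 : GmuAdj ω (f z) (f b2) ↔ ω (f z) = false := by
      rw [gmuAdj_symm]; exact gmuAdj_far (by omega)
    rw [k1, k2]
  have hIne : Im.Nonempty := ⟨f 0, hmemIm 0 (by omega)⟩
  set M1 := Im.min' hIne with hM1def
  set mx := Im.max' hIne with hmxdef
  have hM1mem : M1 ∈ Im := Im.min'_mem hIne
  have hmxmem : mx ∈ Im := Im.max'_mem hIne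
  have hEne : (Im.erase M1).Nonempty := by
    rw [← card_pos, card_erase_of_mem hM1mem]
    omega
  set a := (Im.erase M1).min' hEne with hadef
  have haIm : a ∈ Im := (mem_erase.1 ((Im.erase M1).min'_mem hEne)).2
  have hane : a ≠ M1 := (mem_erase.1 ((Im.erase M1).min'_mem hEne)).1
  have hM1lt : M1 < a := lt_of_le_of_ne (Im.min'_le a haIm) (fun h => hane h.symm)
  have halow : ∀ x ∈ Im, x ≠ M1 → a ≤ x := fun x hx hnex =>
    (Im.erase M1).min'_le x (mem_erase.2 ⟨hnex, hx⟩)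
  have hmxtop : ∀ x ∈ Im, x ≤ mx := fun x hx => Im.le_max' x hx
  have hiv : ∀ k, a + k ≤ mx → a + k ∈ Im := by
    intro k
    induction k with
    | zero => intro _; simpa using haIm
    | succ n ih =>
      intro hk
      have h1 : a + n ∈ Im := ih (by omega)
      have h2 := hgap (a + n) h1 ⟨M1, hM1mem, by omega⟩ ⟨mx, hmxmem, by omega⟩
      rwa [show a + n + 1 = a + (n+1) by omega] at h2
  have hImeq : Im = insert M1 (Icc a mx) := by
    ext x
    rw [mem_insert, mem_Icc]
    constructor
    · intro hx
      by_cases h : x = M1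
      · left; exact h
      · right; exact ⟨halow x hx h, hmxtop x hx⟩
    · rintro (rfl | ⟨h1, h2⟩)
      · exact hM1mem
      · have := hiv (x - a) (by omega)
        rwa [show a + (x - a) = x by omega] at this
  have hamx : mx + 1 = a + m := by
    have h1 : Im.card = (Icc a mx).card + 1 := by
      rw [hImeq, card_insert_of_notMem (by rw [mem_Icc]; omega)]
    rw [hcardIm, Nat.card_Icc] at h1
    have hax : a ≤ mx := hmxtop a haIm
    omega
  have ha1 : 1 ≤ a := by omega
  have hmxle : mx ≤ w.length := by
    obtain ⟨j, hj, hfj⟩ := hImel mx hmxmem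
    rw [← hfj]
    exact hfle j hj
  set d : ℕ → Bool := fun j => if j = 1 then (if a = M1 + 1 then ω a else !(ω a))
    else ω (a + j - 1) with hddef
  set g : ℕ → ℕ := fun j => if f j = M1 then 0 else f j + 1 - a with hgdef
  have hfr : ∀ j, j ≤ m → f j = M1 ∨ (a ≤ f j ∧ f j ≤ mx) := by
    intro j hj
    have := hmemIm j hj
    rw [hImeq, mem_insert, mem_Icc] at this
    tauto
  have hgval : ∀ j, j ≤ m → f j ≠ M1 → g j = f j + 1 - a := by
    intro j hj hnex
    simp only [hgdef, if_neg hnex]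
  have hg0 : ∀ j, j ≤ m → f j = M1 → g j = 0 := by
    intro j hj hx
    simp only [hgdef, hx, if_pos]
  have hgle : ∀ j, j ≤ m → g j ≤ m := by
    intro j hj
    rcases hfr j hj with h | ⟨h1, h2⟩
    · rw [hg0 j hj h]; omega
    · rw [hgval j hj (by omega)]; omega
  have hginj : ∀ i, i ≤ m → ∀ j, j ≤ m → g i = g j → i = j := by
    intro i hi j hj hij
    apply hfinj i hi j hj
    rcases hfr i hi with h1 | ⟨h1, h1'⟩ <;> rcases hfr j hj with h2 | ⟨h2, h2'⟩
    · rw [h1, h2]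
    · rw [hg0 i hi h1, hgval j hj (by omega)] at hij; omega
    · rw [hg0 j hj h2, hgval i hi (by omega)] at hij; omega
    · rw [hgval i hi (by omega), hgval j hj (by omega)] at hij; omega
  have hgsurj : ∀ t, t ≤ m → ∃ j, j ≤ m ∧ g j = t := by
    intro t ht
    rcases Nat.eq_zero_or_pos t with rfl | htpos
    · obtain ⟨j, hj, hfj⟩ := hImel M1 hM1mem
      exact ⟨j, hj, hg0 j hj hfj⟩
    · have hy : a + t - 1 ∈ Im := by
        have := hiv (t - 1) (by omega)
        rwa [show a + (t-1) = a + t - 1 by omega] at this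
      obtain ⟨j, hj, hfj⟩ := hImel (a + t - 1) hy
      refine ⟨j, hj, ?_⟩
      rw [hgval j hj (by rw [hfj]; omega), hfj]
      omega
  have hdmid : ∀ y, 2 ≤ y → d y = ω (a + y - 1) := by
    intro y hy
    simp only [hddef, if_neg (show ¬ y = 1 by omega)]
  have key : ∀ i j, i ≤ m → j ≤ m → f i < f j →
      (GmuAdj ω (f i) (f j) ↔ GmuAdj d (g i) (g j)) := by
    intro i j hi hj hij
    have hfjne : f j ≠ M1 := by
      intro h
      have hle2 := Im.min'_le (f i) (hmemIm i hi)
      rw [← hM1def] at hle2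
      omega
    obtain ⟨hja, hjmx⟩ : a ≤ f j ∧ f j ≤ mx := by
      rcases hfr j hj with h | h
      · exact absurd h hfjne
      · exact h
    have hgj : g j = f j + 1 - a := hgval j hj hfjne
    rcases hfr i hi with h1 | ⟨h1, h1'⟩
    · have hgi : g i = 0 := hg0 i hi h1
      by_cases hfja : f j = a
      · have hgj1 : g j = 1 := by rw [hgj, hfja]; omega
        rw [hgi, hgj1, h1, hfja]
        have hd1 : GmuAdj d 0 1 ↔ d 1 = true := by
          have := gmuAdj_succ (c := d) (i := 0); simpa using this
        have hd1v : d 1 = (if a = M1 + 1 then ω a else !(ω a)) := by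
          simp [hddef]
        rw [hd1, gmuAdj_lt hM1lt, hd1v]
        by_cases hconn : a = M1 + 1
        · rw [if_pos hconn]
          constructor
          · rintro (⟨h, -⟩ | ⟨-, h⟩)
            · exact h
            · omega
          · intro h; exact Or.inl ⟨h, hconn⟩
        · rw [if_neg hconn]
          constructor
          · rintro (⟨-, h⟩ | ⟨h, -⟩)
            · omega
            · rw [h]; rfl
          · intro h
            refine Or.inr ⟨?_, by omega⟩
            rcases hval : ω a with _|_
            · rfl
            · rw [hval] at h; simp at h
      · have hja1 : a + 1 ≤ f j := by omega
        have hgj2 : 2 ≤ g j := by omega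
        rw [hgi, h1]
        have hL : GmuAdj ω M1 (f j) ↔ ω (f j) = false := gmuAdj_far (by omega)
        have hR : GmuAdj d 0 (g j) ↔ d (g j) = false := gmuAdj_far (by omega)
        rw [hL, hR, hdmid (g j) hgj2, hgj, show a + (f j + 1 - a) - 1 = f j by omega]
    · have hfine : f i ≠ M1 := by omega
      have hgi : g i = f i + 1 - a := hgval i hi hfine
      have hgij : g i < g j := by omega
      rw [gmuAdj_lt hij, gmuAdj_lt hgij, hdmid (g j) (by omega), hgj,
        show a + (f j + 1 - a) - 1 = f j by omega]
      constructor
      · rintro (⟨h, he⟩ | ⟨h, he⟩)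
        · exact Or.inl ⟨h, by omega⟩
        · exact Or.inr ⟨h, by omega⟩
      · rintro (⟨h, he⟩ | ⟨h, he⟩)
        · exact Or.inl ⟨h, by omega⟩
        · exact Or.inr ⟨h, by omega⟩
  have hgpres : ∀ i, i ≤ m → ∀ j, j ≤ m → (GmuAdj c i j ↔ GmuAdj d (g i) (g j)) := by
    intro i hi j hj
    rw [hE i hi j hj]
    rcases lt_trichotomy (f i) (f j) with h | h | h
    · exact key i j hi hj h
    · have heq : i = j := hfinj i hi j hj h
      subst heq
      constructor
      · intro hh; exact (gmuAdj_irrefl hh).elim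
      · intro hh; exact (gmuAdj_irrefl hh).elim
    · rw [gmuAdj_symm, gmuAdj_symm (i := g i)]
      exact key j i hj hi h
  have hcd := word_word hm hcm1 hcm hp ⟨q, hq4, hqm, hcq⟩ hgle hginj hgsurj hgpres
  refine ⟨a, ha1, by omega, ?_⟩
  intro j h3 hjm
  have h1 := hcd j h3 hjm
  rw [hdmid j (by omega)] at h1
  rw [h1, hωdef]
  show w.getD (a + j - 2) false = w.getD (a + j - 1 - 1) false
  rw [show a + j - 1 - 1 = a + j - 2 by omega]


lemma mono_steps {f : ℕ → ℕ} {s n : ℕ}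
    (hstep : ∀ k, k < n → f (s+k+1) = f (s+k) + 1 ∨ f (s+k) = f (s+k+1) + 1)
    (hinj : ∀ k l, k ≤ n → l ≤ n → f (s+k) = f (s+l) → k = l) :
    (∀ k, k ≤ n → f (s+k) = f s + k) ∨ (∀ k, k ≤ n → f (s+k) + k = f s) := by
  rcases Nat.eq_zero_or_pos n with rfl | hn
  · left; intro k hk; interval_cases k; simp
  rcases hstep 0 (by omega) with hup | hdown
  · left
    intro k
    induction k using Nat.strong_induction_on with
    | _ k ih =>
      intro hk
      match k, hk with
      | 0, _ => simp
      | 1, hk => simpa using hup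
      | (k+2), hk =>
        rcases hstep (k+1) (by omega) with h | h
        · rw [show s+(k+2) = s+(k+1)+1 by omega, h, ih (k+1) (by omega) (by omega)]
          omega
        · exfalso
          have e1 : f (s+(k+1)) = f s + (k+1) := ih (k+1) (by omega) (by omega)
          have e2 : f (s+k) = f s + k := ih k (by omega) (by omega)
          rw [show s+(k+1)+1 = s+(k+2) by omega] at h
          have : f (s+(k+2)) = f (s + k) := by omega
          have := hinj (k+2) k (by omega) (by omega) this
          omega
  · right
    intro k
    induction k using Nat.strong_induction_on with
    | _ k ih =>
      intro hk
      match k, hk with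
      | 0, _ => simp
      | 1, hk =>
        have h0 := hdown
        rw [show s+0+1 = s+1 by omega, show s+0 = s by omega] at h0
        omega
      | (k+2), hk =>
        rcases hstep (k+1) (by omega) with h | h
        · exfalso
          have e1 : f (s+(k+1)) + (k+1) = f s := ih (k+1) (by omega) (by omega)
          have e2 : f (s+k) + k = f s := ih k (by omega) (by omega)
          rw [show s+(k+1)+1 = s+(k+2) by omega] at h
          have : f (s+(k+2)) = f (s + k) := by omega
          have := hinj (k+2) k (by omega) (by omega) this
          omega
        · have e1 : f (s+(k+1)) + (k+1) = f s := ih (k+1) (by omega) (by omega)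
          rw [show s+(k+1)+1 = s+(k+2) by omega] at h
          omega

lemma core_const {w : List Bool} {f : ℕ → ℕ} {b : Bool} {n : ℕ}
    (hmn : 5 * n + 8 ≤ m)
    (hb : ∀ j, 1 ≤ j → j ≤ m → c j = b)
    (hfle : ∀ j, j ≤ m → f j ≤ w.length)
    (hfinj : ∀ i, i ≤ m → ∀ j, j ≤ m → f i = f j → i = j)
    (hfadj : ∀ i, i ≤ m → ∀ j, j ≤ m → (GmuAdj c i j ↔ GWAdj w (f i) (f j))) :
    ∃ t, t + n ≤ w.length ∧ ∀ k, k < n → w.getD (t + k) false = b := by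
  classical
  set ω : ℕ → Bool := fun y => w.getD (y-1) false with hωdef
  have hE : ∀ i, i ≤ m → ∀ j, j ≤ m → (GmuAdj c i j ↔ GmuAdj ω (f i) (f j)) := by
    intro i hi j hj
    rw [← gwAdj_eq_gmuAdj]
    exact hfadj i hi j hj
  set K := (range (m+1)).filter (fun j => ω (f j) = !b) with hKdef
  have hKmem : ∀ z, z ∈ K ↔ (z ≤ m ∧ ω (f z) = !b) := by
    intro z
    rw [hKdef, mem_filter, mem_range]
    constructor
    · rintro ⟨h1, h2⟩; exact ⟨by omega, h2⟩
    · rintro ⟨h1, h2⟩; exact ⟨by omega, h2⟩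
  have hgood : ∀ z, z ≤ m → z ∉ K → ω (f z) = b := by
    intro z hz hzn
    have h : ¬ (ω (f z) = !b) := fun hh => hzn ((hKmem z).2 ⟨hz, hh⟩)
    rcases hw : ω (f z) <;> rcases hb2 : b <;> simp [hw, hb2] at h ⊢
  have hK4 : K.card ≤ 4 := by
    by_contra hcon
    push_neg at hcon
    have hne : K.Nonempty := card_pos.1 (by omega)
    obtain ⟨js, hjsK, hjsmax⟩ := K.exists_max_image f hne
    obtain ⟨hjsm, hjsbad⟩ := (hKmem js).1 hjsK
    have hsub : K.erase js ⊆ ({js - 1, js + 1} : Finset ℕ)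
        ∪ (range (m+1)).filter (fun i => f i = f js - 1) := by
      intro i hi
      obtain ⟨hine, hiK⟩ := mem_erase.1 hi
      obtain ⟨him, hibad⟩ := (hKmem i).1 hiK
      have hilt : f i < f js :=
        lt_of_le_of_ne (hjsmax i hiK) (fun h => hine (hfinj i him js hjsm h))
      rw [mem_union, mem_insert, mem_singleton, mem_filter, mem_range]
      by_cases hgap : f i + 2 ≤ f js
      · left
        by_contra hcon2
        push_neg at hcon2
        have hAiff : GmuAdj c i js ↔ (b = false) := by
          rcases Nat.lt_or_ge i js with h | h
          · rw [gmuAdj_far (show i + 2 ≤ js by omega)]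
            rw [hb js (by omega) hjsm]
          · rw [gmuAdj_symm, gmuAdj_far (show js + 2 ≤ i by omega)]
            rw [hb i (by omega) him]
        have hEiff : GmuAdj ω (f i) (f js) ↔ ((!b) = false) := by
          rw [gmuAdj_far hgap, hjsbad]
        have hfin := hEiff.symm.trans ((hE i him js hjsm).symm.trans hAiff)
        rcases hbv : b <;> rw [hbv] at hfin <;> simp at hfin
      · right
        exact ⟨by omega, by omega⟩
    have hc1 : (({js - 1, js + 1} : Finset ℕ)
        ∪ (range (m+1)).filter (fun i => f i = f js - 1)).card ≤ 3 := by
      refine le_trans (card_union_le _ _) ?_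
      have h1 : ({js - 1, js + 1} : Finset ℕ).card ≤ 2 := card_insert_le _ _ |>.trans (by simp)
      have h2 : ((range (m+1)).filter (fun i => f i = f js - 1)).card ≤ 1 := by
        refine card_le_one.2 ?_
        intro a1 ha1 a2 ha2
        rw [mem_filter, mem_range] at ha1 ha2
        exact hfinj a1 (by omega) a2 (by omega) (ha1.2.trans ha2.2.symm)
      omega
    have := card_le_card hsub
    rw [card_erase_of_mem hjsK] at this
    omega
  -- pigeonhole: a (n+1)-run avoiding K
  have hrun : ∃ s, s + n ≤ m ∧ ∀ k, k ≤ n → s + k ∉ K := by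
    by_contra hcon
    push_neg at hcon
    obtain ⟨k0, hk0, hK0⟩ := hcon 0 (by omega)
    obtain ⟨k1, hk1, hK1⟩ := hcon (n+1) (by omega)
    obtain ⟨k2, hk2, hK2⟩ := hcon (2*n+2) (by omega)
    obtain ⟨k3, hk3, hK3⟩ := hcon (3*n+3) (by omega)
    obtain ⟨k4, hk4, hK4'⟩ := hcon (4*n+4) (by omega)
    have hsub : ({0 + k0, n+1 + k1, 2*n+2 + k2, 3*n+3 + k3, 4*n+4 + k4} : Finset ℕ) ⊆ K := by
      intro z hz
      simp only [mem_insert, mem_singleton] at hz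
      rcases hz with rfl|rfl|rfl|rfl|rfl <;> assumption
    have hcard : ({0 + k0, n+1 + k1, 2*n+2 + k2, 3*n+3 + k3, 4*n+4 + k4} : Finset ℕ).card = 5 := by
      have e1 : ({3*n+3 + k3, 4*n+4 + k4} : Finset ℕ).card = 2 := by
        rw [card_insert_of_notMem (by simp only [mem_singleton]; omega), card_singleton]
      have e2 : ({2*n+2 + k2, 3*n+3 + k3, 4*n+4 + k4} : Finset ℕ).card = 3 := by
        rw [card_insert_of_notMem (by
          simp only [mem_insert, mem_singleton]
          push_neg
          exact ⟨by omega, by omega⟩), e1]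
      have e3 : ({n+1 + k1, 2*n+2 + k2, 3*n+3 + k3, 4*n+4 + k4} : Finset ℕ).card = 4 := by
        rw [card_insert_of_notMem (by
          simp only [mem_insert, mem_singleton]
          push_neg
          exact ⟨by omega, by omega, by omega⟩), e2]
      rw [card_insert_of_notMem (by
        simp only [mem_insert, mem_singleton]
        push_neg
        exact ⟨by omega, by omega, by omega, by omega⟩), e3]
    have := card_le_card hsub
    omega
  obtain ⟨s, hsn, hsK⟩ := hrun
  have hstep : ∀ k, k < n → f (s+k+1) = f (s+k) + 1 ∨ f (s+k) = f (s+k+1) + 1 := by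
    intro k hk
    by_contra hcon
    push_neg at hcon
    have hne : f (s+k) ≠ f (s+k+1) :=
      fun h => by have := hfinj (s+k) (by omega) (s+k+1) (by omega) h; omega
    have hAiff : GmuAdj c (s+k) (s+k+1) ↔ (b = true) := by
      rw [gmuAdj_succ, hb (s+k+1) (by omega) (by omega)]
    have hEiff : GmuAdj ω (f (s+k)) (f (s+k+1)) ↔ (b = false) := by
      rcases Nat.lt_or_ge (f (s+k)) (f (s+k+1)) with h | h
      · rw [gmuAdj_far (show f (s+k) + 2 ≤ f (s+k+1) by omega)]
        rw [hgood (s+k+1) (by omega) (hsK (k+1) (by omega))]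
      · rw [gmuAdj_symm, gmuAdj_far (show f (s+k+1) + 2 ≤ f (s+k) by omega)]
        rw [hgood (s+k) (by omega) (hsK k (by omega))]
    have hfin := hEiff.symm.trans ((hE (s+k) (by omega) (s+k+1) (by omega)).symm.trans hAiff)
    rcases hbv : b <;> rw [hbv] at hfin <;> simp at hfin
  have hinj2 : ∀ k l, k ≤ n → l ≤ n → f (s+k) = f (s+l) → k = l := by
    intro k l hk hl h
    have := hfinj (s+k) (by omega) (s+l) (by omega) h
    omega
  rcases mono_steps hstep hinj2 with hup | hdown
  · refine ⟨f s, ?_, ?_⟩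
    · have := hfle (s+n) (by omega)
      rw [hup n le_rfl] at this
      omega
    · intro k hk
      have h1 : ω (f (s+(k+1))) = b := hgood (s+(k+1)) (by omega) (hsK (k+1) (by omega))
      rw [hup (k+1) (by omega)] at h1
      rw [← h1, hωdef]
      show w.getD (f s + k) false = w.getD (f s + (k+1) - 1) false
      rw [show f s + (k+1) - 1 = f s + k by omega]
  · have hfsn : n ≤ f s := by
      have := hdown n le_rfl
      omega
    refine ⟨f s - n, ?_, ?_⟩
    · have := hfle s (by omega)
      omega
    · intro k hk
      have hl : n - k - 1 ≤ n := by omega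
      have h1 : ω (f (s+(n-k-1))) = b := hgood (s+(n-k-1)) (by omega) (hsK (n-k-1) hl)
      have h2 : f (s+(n-k-1)) = f s - n + k + 1 := by
        have := hdown (n-k-1) hl
        omega
      rw [h2] at h1
      rw [← h1, hωdef]
      show w.getD (f s - n + k) false = w.getD (f s - n + k + 1 - 1) false
      rw [show f s - n + k + 1 - 1 = f s - n + k by omega]


lemma getD_map_range {g : ℕ → Bool} {L k : ℕ} (hk : k < L) :
    ((List.range L).map g).getD k false = g k := by
  rw [List.getD_eq_getElem _ _ (by simp [hk])]
  simp

lemma map_range_eq {g h : ℕ → Bool} {L : ℕ}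
    (he : (List.range L).map g = (List.range L).map h) :
    ∀ k, k < L → g k = h k := by
  intro k hk
  have h1 : ((List.range L).map g).getD k false = ((List.range L).map h).getD k false := by
    rw [he]
  rwa [getD_map_range hk, getD_map_range hk] at h1

lemma infix_take_drop (w : List Bool) (t L : ℕ) : (w.drop t).take L <:+: w :=
  ⟨w.take t, (w.drop t).drop L, by
    rw [List.append_assoc, List.take_append_drop, List.take_append_drop]⟩

lemma eq_take_drop {μ : ℕ → Bool} {w : List Bool} {i t L : ℕ}
    (hlen : t + L ≤ w.length)
    (hlet : ∀ k, k < L → w.getD (t + k) false = μ (i + 1 + k)) :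
    (List.range L).map (fun k => μ (i + 1 + k)) = (w.drop t).take L := by
  apply List.ext_getElem
  · simp; omega
  · intro k h1 h2
    have hk : k < L := by simpa using h1
    rw [List.getElem_map, List.getElem_range, List.getElem_take, List.getElem_drop,
       ← List.getD_eq_getElem _ false (by omega)]
    exact (hlet k hk).symm

lemma window_mem_Fac1 (μ : ℕ → Bool) (i L : ℕ) :
    (List.range L).map (fun k => μ (i + 1 + k)) ∈ Fac1 μ := by
  refine ⟨i, ?_⟩
  simp

lemma fac1_closed (μ' : ℕ → Bool) :
    ∀ v u : List Bool, u ∈ Fac1 μ' → v <:+: u → v ∈ Fac1 μ' := by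
  rintro v u ⟨i, hu⟩ ⟨s, t, hst⟩
  refine ⟨i + s.length, ?_⟩
  have hlen : u.length = s.length + (v.length + t.length) := by
    rw [← hst]; simp
  apply List.ext_getElem
  · simp
  · intro k h1 h2
    have hk : k < v.length := h1
    have e1 : (s ++ v ++ t).getD (s.length + k) false = v[k] := by
      rw [List.getD_eq_getElem _ _ (by simp; omega)]
      rw [List.getElem_append_left (by simp; omega), List.getElem_append_right (by omega)]
      congr 1
      omega
    rw [hst] at e1
    rw [hu, getD_map_range (by omega)] at e1
    rw [List.getElem_map, List.getElem_range, ← e1]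
    congr 1
    omega

lemma rec_window {μ : ℕ → Bool} (hrec : Recurrent1 μ) (i L N : ℕ) :
    ∃ i', N ≤ i' ∧ ∀ k, k < L → μ (i' + 1 + k) = μ (i + 1 + k) := by
  obtain ⟨i', hi', heq⟩ := hrec _ (window_mem_Fac1 μ i L) N
  simp only [List.length_map, List.length_range] at heq
  exact ⟨i', hi', fun k hk => (map_range_eq heq k hk).symm⟩

lemma exists_pair {μ : ℕ → Bool} (hrec : Recurrent1 μ)
    (hT : ∃ k, 1 ≤ k ∧ μ k = true) (hF : ∃ k, 1 ≤ k ∧ μ k = false) :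
    ∃ k, 1 ≤ k ∧ μ k = true ∧ μ (k+1) = false := by
  by_contra hcon
  push_neg at hcon
  obtain ⟨k1, hk11, hk1T⟩ := hT
  obtain ⟨k2, hk21, hk2F⟩ := hF
  have hall : ∀ d, μ (k1 + d) = true := by
    intro d
    induction d with
    | zero => simpa using hk1T
    | succ nn ih =>
      have h2 := hcon (k1 + nn) (by omega) ih
      rcases hval : μ (k1 + nn + 1) with _|_
      · exact absurd hval h2
      · rfl
  obtain ⟨i', hi', hw⟩ := rec_window hrec (k2 - 1) 1 k1
  have hfalse : μ (i' + 1) = false := by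
    have := hw 0 (by omega)
    rw [show k2 - 1 + 1 + 0 = k2 by omega] at this
    simpa using this.trans hk2F
  have h2 := hall (i' + 1 - k1)
  rw [show k1 + (i' + 1 - k1) = i' + 1 by omega] at h2
  rw [h2] at hfalse
  cases hfalse

lemma gmuAdj_shift (μ : ℕ → Bool) (aa i j : ℕ) :
    GmuAdj (fun x => μ (aa + x)) i j ↔ GmuAdj μ (aa+i) (aa+j) := by
  constructor
  · rintro (⟨h1, ⟨h2, h3⟩|⟨h2, h3⟩⟩ | ⟨h1, ⟨h2, h3⟩|⟨h2, h3⟩⟩)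
    · exact Or.inl ⟨by omega, Or.inl ⟨h2, by omega⟩⟩
    · exact Or.inl ⟨by omega, Or.inr ⟨h2, by omega⟩⟩
    · exact Or.inr ⟨by omega, Or.inl ⟨h2, by omega⟩⟩
    · exact Or.inr ⟨by omega, Or.inr ⟨h2, by omega⟩⟩
  · rintro (⟨h1, ⟨h2, h3⟩|⟨h2, h3⟩⟩ | ⟨h1, ⟨h2, h3⟩|⟨h2, h3⟩⟩)
    · exact Or.inl ⟨by omega, Or.inl ⟨h2, by omega⟩⟩
    · exact Or.inl ⟨by omega, Or.inr ⟨h2, by omega⟩⟩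
    · exact Or.inr ⟨by omega, Or.inl ⟨h2, by omega⟩⟩
    · exact Or.inr ⟨by omega, Or.inr ⟨h2, by omega⟩⟩


end WW

section Top
open scoped Classical

lemma emb_setup {μ : ℕ → Bool} {w : List Bool} {S : Finset ℕ} {aa m : ℕ}
    (hS : ∀ j, j ≤ m → aa + j ∈ (↑S : Set ℕ))
    (e : (Gmu μ).induce (↑S : Set ℕ) ↪g GW w) :
    ∃ f : ℕ → ℕ,
      (∀ j, j ≤ m → f j ≤ w.length) ∧
      (∀ i, i ≤ m → ∀ j, j ≤ m → f i = f j → i = j) ∧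
      (∀ i, i ≤ m → ∀ j, j ≤ m →
        (GmuAdj (fun x => μ (aa + x)) i j ↔ GWAdj w (f i) (f j))) := by
  refine ⟨fun j => if h : j ≤ m then (e ⟨aa + j, hS j h⟩ : ℕ) else 0, ?_, ?_, ?_⟩
  · intro j h
    dsimp only
    rw [dif_pos h]
    exact Nat.lt_succ_iff.1 (e ⟨aa + j, hS j h⟩).isLt
  · intro i hi j hj hval
    dsimp only at hval
    rw [dif_pos hi, dif_pos hj] at hval
    have h2 := e.injective (Fin.ext hval)
    have h3 : aa + i = aa + j := congrArg Subtype.val h2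
    omega
  · intro i hi j hj
    dsimp only
    rw [dif_pos hi, dif_pos hj, gmuAdj_shift]
    exact (e.map_rel_iff (a := ⟨aa + i, hS i hi⟩) (b := ⟨aa + j, hS j hj⟩)).symm

lemma const_case {μ : ℕ → Bool} {b : Bool} (hconst : ∀ j, 1 ≤ j → μ j = b)
    (X : Set (List Bool))
    (hX : ∀ v u : List Bool, u ∈ X → v <:+: u → v ∈ X)
    (hEmb : ∀ S : Finset ℕ, ∃ w ∈ X, Nonempty ((Gmu μ).induce (↑S : Set ℕ) ↪g GW w)) :
    Fac1 μ ⊆ X := by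
  rintro v ⟨i, hv⟩
  set n := v.length with hn
  set m := 5 * n + 8 with hm
  obtain ⟨w, hwX, ⟨e⟩⟩ := hEmb (Finset.range (m+1))
  have hS : ∀ j, j ≤ m → 0 + j ∈ (↑(Finset.range (m+1)) : Set ℕ) := by
    intro j hj
    simp only [Finset.coe_range, Set.mem_Iio]
    omega
  obtain ⟨f, hfle, hfinj, hfadj⟩ := emb_setup hS e
  have hfadj' : ∀ i', i' ≤ m → ∀ j, j ≤ m → (GmuAdj μ i' j ↔ GWAdj w (f i') (f j)) := by
    intro i' hi j hj
    have := hfadj i' hi j hj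
    rw [gmuAdj_shift] at this
    simpa using this
  obtain ⟨t, htlen, hrun⟩ := core_const (c := μ) (m := m) (b := b) (n := n) (by omega)
    (fun j hj _ => hconst j hj) hfle hfinj hfadj'
  apply hX v w hwX
  have hv2 : v = (w.drop t).take n := by
    rw [hv]
    apply eq_take_drop htlen
    intro k hk
    rw [hrun k hk, hconst (i+1+k) (by omega)]
  rw [hv2]
  exact infix_take_drop w t n

lemma mixed_case {μ : ℕ → Bool} (hrec : Recurrent1 μ)
    (hT : ∃ k, 1 ≤ k ∧ μ k = true) (hF : ∃ k, 1 ≤ k ∧ μ k = false)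
    (X : Set (List Bool))
    (hX : ∀ v u : List Bool, u ∈ X → v <:+: u → v ∈ X)
    (hEmb : ∀ S : Finset ℕ, ∃ w ∈ X, Nonempty ((Gmu μ).induce (↑S : Set ℕ) ↪g GW w)) :
    Fac1 μ ⊆ X := by
  rintro v ⟨i0, hv⟩
  set n := v.length with hn
  -- find two descents "10" after the occurrence of v
  obtain ⟨k0, hk01, hk0⟩ := exists_pair hrec hT hF
  obtain ⟨i1, hi1ge, hw1⟩ := rec_window hrec (k0 - 1) 2 (i0 + n + 1)
  have hpT1 : μ (i1 + 1) = true := by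
    have := hw1 0 (by omega)
    rw [show k0 - 1 + 1 + 0 = k0 by omega, show i1 + 1 + 0 = i1 + 1 by omega] at this
    rw [this, hk0.1]
  have hpF1 : μ (i1 + 2) = false := by
    have := hw1 1 (by omega)
    rw [show k0 - 1 + 1 + 1 = k0 + 1 by omega, show i1 + 1 + 1 = i1 + 2 by omega] at this
    rw [this, hk0.2]
  obtain ⟨i2, hi2ge, hw2⟩ := rec_window hrec (k0 - 1) 2 (i1 + 3)
  have hpT2 : μ (i2 + 1) = true := by
    have := hw2 0 (by omega)
    rw [show k0 - 1 + 1 + 0 = k0 by omega, show i2 + 1 + 0 = i2 + 1 by omega] at this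
    rw [this, hk0.1]
  have hpF2 : μ (i2 + 2) = false := by
    have := hw2 1 (by omega)
    rw [show k0 - 1 + 1 + 1 = k0 + 1 by omega, show i2 + 1 + 1 = i2 + 2 by omega] at this
    rw [this, hk0.2]
  -- the long factor u from i0+1 to i2+2, re-occurring at position i3 ≥ 2
  set Lu := i2 + 2 - i0 with hLu
  obtain ⟨i3, hi3ge, hcopy⟩ := rec_window hrec i0 Lu 2
  set aa := i3 - 2 with haa
  set m := Lu + 2 with hmdef
  set c : ℕ → Bool := fun x => μ (aa + x) with hcdef
  have hm8 : 8 ≤ m := by omega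
  have haa3 : aa + 3 = i3 + 1 := by omega
  have hcj : ∀ j, 3 ≤ j → j ≤ m → c j = μ (i0 + 1 + (j - 3)) := by
    intro j h3 hjm
    have h1 : aa + j = i3 + 1 + (j - 3) := by omega
    rw [hcdef]
    show μ (aa + j) = _
    rw [h1]
    exact hcopy (j-3) (by omega)
  have hcm1 : c (m-1) = true := by
    rw [hcj (m-1) (by omega) (by omega), show i0 + 1 + (m - 1 - 3) = i2 + 1 by omega, hpT2]
  have hcm : c m = false := by
    rw [hcj m (by omega) le_rfl, show i0 + 1 + (m - 3) = i2 + 2 by omega, hpF2]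
  set q := i1 - i0 + 3 with hq
  have hq4 : 4 ≤ q := by omega
  have hqm : q + 2 ≤ m := by omega
  have hcq : c q = true := by
    rw [hcj q (by omega) (by omega), show i0 + 1 + (q - 3) = i1 + 1 by omega, hpT1]
  have hcp : c (q+1) = false := by
    rw [hcj (q+1) (by omega) (by omega), show i0 + 1 + (q + 1 - 3) = i1 + 2 by omega, hpF1]
  obtain ⟨w, hwX, ⟨e⟩⟩ := hEmb ((Finset.range (m+1)).image (fun j => aa + j))
  have hS : ∀ j, j ≤ m → aa + j ∈ (↑((Finset.range (m+1)).image (fun j => aa + j)) : Set ℕ) := by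
    intro j hj
    rw [Finset.mem_coe, Finset.mem_image]
    exact ⟨j, Finset.mem_range.2 (by omega), rfl⟩
  obtain ⟨f, hfle, hfinj, hfadj⟩ := emb_setup hS e
  obtain ⟨a, ha1, halen, hread⟩ := core_mixed (c := c) (m := m) hm8 hcm1 hcm
    ⟨q+1, by omega, by omega, hcp⟩ ⟨q, hq4, hqm, hcq⟩ hfle hfinj hfadj
  apply hX v w hwX
  have hv2 : v = (w.drop (a+1)).take n := by
    rw [hv]
    refine eq_take_drop (by omega) ?_
    intro k hk
    have h1 := hread (k+3) (by omega) (by omega)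
    rw [show a + (k+3) - 2 = a + 1 + k by omega] at h1
    rw [h1, hcj (k+3) (by omega) (by omega),
      show i0 + 1 + (k + 3 - 3) = i0 + 1 + k from by omega]
  rw [hv2]
  exact infix_take_drop w (a+1) n

end Top



theorem stmt14 (μ : ℕ → Bool) (hrec : Recurrent1 μ) :
    (∀ X : Set (List Bool),
      (∀ v u : List Bool, u ∈ X → v <:+: u → v ∈ X) →
      (∀ S : Finset ℕ, ∃ w ∈ X, Nonempty ((Gmu μ).induce (↑S : Set ℕ) ↪g GW w)) →
      Fac1 μ ⊆ X) ∧
    (∀ μ' : ℕ → Bool,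
      (∀ S : Finset ℕ, Nonempty ((Gmu μ).induce (↑S : Set ℕ) ↪g Gmu μ')) →
      Fac1 μ ⊆ Fac1 μ') := by
  classical
  have main : ∀ X : Set (List Bool),
      (∀ v u : List Bool, u ∈ X → v <:+: u → v ∈ X) →
      (∀ S : Finset ℕ, ∃ w ∈ X, Nonempty ((Gmu μ).induce (↑S : Set ℕ) ↪g GW w)) →
      Fac1 μ ⊆ X := by
    intro X hX hEmb
    by_cases hT : ∃ k, 1 ≤ k ∧ μ k = true
    · by_cases hF : ∃ k, 1 ≤ k ∧ μ k = false
      · exact mixed_case hrec hT hF X hX hEmb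
      · push_neg at hF
        refine const_case (b := true) ?_ X hX hEmb
        intro j hj
        rcases hval : μ j with _|_
        · exact absurd hval (hF j hj)
        · rfl
    · push_neg at hT
      refine const_case (b := false) ?_ X hX hEmb
      intro j hj
      rcases hval : μ j with _|_
      · rfl
      · exact absurd hval (hT j hj)
  refine ⟨main, ?_⟩
  intro μ' hEmb2
  apply main (Fac1 μ') (fac1_closed μ')
  intro S
  obtain ⟨e⟩ := hEmb2 S
  set N := S.sup (fun x => if h : x ∈ S then e ⟨x, Finset.mem_coe.2 h⟩ else 0) with hN
  have hbound : ∀ (x : (↑S : Set ℕ)), e x ≤ N := by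
    intro x
    have hx : (x : ℕ) ∈ S := Finset.mem_coe.1 x.2
    have hle := Finset.le_sup
      (f := fun y => if h : y ∈ S then e ⟨y, Finset.mem_coe.2 h⟩ else 0) hx
    rw [dif_pos hx] at hle
    exact hle
  set w := (List.range N).map (fun k => μ' (0 + 1 + k)) with hw
  have hwlen : w.length = N := by simp [hw]
  have hwlet : ∀ j, 1 ≤ j → j ≤ N → w.getD (j-1) false = μ' j := by
    intro j h1 h2
    rw [hw, getD_map_range (by omega)]
    congr 1
    omega
  have hadj : ∀ x y : ℕ, x ≤ N → y ≤ N → (GWAdj w x y ↔ GmuAdj μ' x y) := by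
    intro x y hx hy
    rcases lt_trichotomy x y with h | h | h
    · rw [gwAdj_lt h, gmuAdj_lt h, hwlet y (by omega) hy]
    · subst h
      constructor
      · rintro (⟨h2, -⟩ | ⟨h2, -⟩) <;> omega
      · intro hh
        exact absurd hh gmuAdj_irrefl
    · have h1 : GWAdj w x y ↔ GWAdj w y x := ⟨Or.symm, Or.symm⟩
      rw [h1, gwAdj_lt h, gmuAdj_symm, gmuAdj_lt h, hwlet x (by omega) hx]
  refine ⟨w, ⟨0, by simp [hw]⟩, ⟨⟨⟨fun x => ⟨e x, by
    rw [hwlen]; exact Nat.lt_succ_of_le (hbound x)⟩, ?_⟩, ?_⟩⟩⟩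
  · intro x y hxy
    have h2 : e x = e y := congrArg Fin.val hxy
    exact e.injective h2
  · intro a b
    show GWAdj w (e a) (e b) ↔ _
    rw [hadj (e a) (e b) (hbound a) (hbound b)]
    exact e.map_rel_iff
end

section
/- Let μ : {1,2,3,…} → {0,1} be a recurrent 0-1 word and let w = w₁…wₙ be a finite 0-1 word with n ≥ 1. If the word w₂…wₙ (w with its first letter deleted) is a factor of μ, then the graph G_w admits an induced embedding into G_μ. -/
lemma GmuAdj_iff (μ : ℕ → Bool) {u v : ℕ} (h : u < v) :
    GmuAdj μ u v ↔ ((μ v = true ∧ v = u + 1) ∨ (μ v = false ∧ v ≠ u + 1)) := by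
  unfold GmuAdj
  constructor
  · rintro (⟨_, h2⟩ | ⟨h1, _⟩)
    · exact h2
    · omega
  · intro h2; exact Or.inl ⟨h, h2⟩

lemma GWAdj_iff (w : List Bool) {u v : ℕ} (h : u < v) :
    GWAdj w u v ↔ ((w.getD (v - 1) false = true ∧ v = u + 1) ∨
      (w.getD (v - 1) false = false ∧ v ≠ u + 1)) := by
  unfold GWAdj
  constructor
  · rintro (⟨_, h2⟩ | ⟨h1, _⟩)
    · exact h2
    · omega
  · intro h2; exact Or.inl ⟨h, h2⟩

theorem stmt15 (μ : ℕ → Bool) (hrec : Recurrent1 μ) (w : List Bool) (hw : w ≠ [])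
    (htail : w.tail ∈ Fac1 μ) :
    Nonempty (GW w ↪g Gmu μ) := by
  obtain ⟨i, hi2, hocc⟩ := hrec w.tail htail 2
  have hnpos : 1 ≤ w.length := List.length_pos_iff.mpr hw
  have htl : w.tail.length = w.length - 1 := by simp
  -- letters of μ in the occurrence window agree with letters of w
  have hμ : ∀ j, 1 ≤ j → j ≤ w.length - 1 → μ (i + j) = w.getD j false := by
    intro j h1 h2
    have hk : j - 1 < w.tail.length := by omega
    have h3 : w.tail.getD (j - 1) false = μ (i + 1 + (j - 1)) := by
      conv_lhs => rw [hocc]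
      rw [List.getD_eq_getElem _ _ (by simpa using hk)]
      simp
    have h4 : w.tail.getD (j - 1) false = w.getD j false := by
      rw [List.getD_eq_getElem _ _ hk, List.getD_eq_getElem _ _ (by omega)]
      rw [List.getElem_tail]
      congr 1
      omega
    have h5 : i + 1 + (j - 1) = i + j := by omega
    rw [← h4, h3, h5]
  -- choose the image x of vertex 0
  obtain ⟨x, hxi, hxadj⟩ : ∃ x, x < i ∧ (GmuAdj μ x i ↔ w.getD 0 false = true) := by
    by_cases hc : μ i = w.getD 0 false
    · refine ⟨i - 1, by omega, ?_⟩
      rw [GmuAdj_iff μ (show i - 1 < i by omega), hc]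
      cases hb : w.getD 0 false <;> simp <;> omega
    · refine ⟨i - 2, by omega, ?_⟩
      rw [GmuAdj_iff μ (show i - 2 < i by omega)]
      cases hm : μ i <;> cases hb : w.getD 0 false <;>
        first
        | (exact absurd (hm.trans hb.symm) hc)
        | (simp <;> omega)
  -- the embedding
  set f : Fin (w.length + 1) → ℕ := fun v => if (v : ℕ) = 0 then x else i + v - 1 with hf
  have hf0 : ∀ v : Fin (w.length + 1), (v : ℕ) = 0 → f v = x := by
    intro v hv; simp only [hf, hv, if_pos]
  have hfv : ∀ v : Fin (w.length + 1), (v : ℕ) ≠ 0 → f v = i + v - 1 := by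
    intro v hv; simp only [hf, hv, if_neg, if_false]
  have hinj : Function.Injective f := by
    intro a b hab
    by_cases ha : (a : ℕ) = 0 <;> by_cases hb : (b : ℕ) = 0
    · exact Fin.ext (by omega)
    · rw [hf0 a ha, hfv b hb] at hab; exact absurd hab (by omega)
    · rw [hfv a ha, hf0 b hb] at hab; exact absurd hab (by omega)
    · rw [hfv a ha, hfv b hb] at hab; exact Fin.ext (by omega)
  have key : ∀ a b : Fin (w.length + 1), (a : ℕ) < b →
      (GmuAdj μ (f a) (f b) ↔ GWAdj w a b) := by
    intro a b hab
    have hbn : (b : ℕ) ≤ w.length := by omega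
    have hb0 : (b : ℕ) ≠ 0 := by omega
    have hfb : f b = i + b - 1 := hfv b hb0
    by_cases ha0 : (a : ℕ) = 0
    · have hfa : f a = x := hf0 a ha0
      by_cases hb1 : (b : ℕ) = 1
      · -- edge {0,1}
        have hfb1 : f b = i := by rw [hfb, hb1]; omega
        rw [hfa, hfb1, ha0, hb1, hxadj, GWAdj_iff w (show (0:ℕ) < 1 by omega)]
        cases hc : w.getD (1 - 1) false <;> simp [show (1:ℕ) - 1 = 0 from rfl] at hc ⊢ <;>
          simp [hc]
      · -- a = 0, b ≥ 2
        have hb2 : 2 ≤ (b : ℕ) := by omega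
        have hlet : μ (i + b - 1) = w.getD ((b : ℕ) - 1) false := by
          have := hμ ((b : ℕ) - 1) (by omega) (by omega)
          rwa [show i + ((b : ℕ) - 1) = i + (b : ℕ) - 1 by omega] at this
        rw [hfa, hfb, ha0, GmuAdj_iff μ (show x < i + (b : ℕ) - 1 by omega),
          GWAdj_iff w (show 0 < (b : ℕ) by omega), hlet]
        cases hc : w.getD ((b : ℕ) - 1) false <;> simp [hc] <;> omega
    · -- a ≥ 1, b ≥ 2
      have ha1 : 1 ≤ (a : ℕ) := by omega
      have hb2 : 2 ≤ (b : ℕ) := by omega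
      have hfa : f a = i + a - 1 := hfv a ha0
      have hlet : μ (i + b - 1) = w.getD ((b : ℕ) - 1) false := by
        have := hμ ((b : ℕ) - 1) (by omega) (by omega)
        rwa [show i + ((b : ℕ) - 1) = i + (b : ℕ) - 1 by omega] at this
      rw [hfa, hfb, GmuAdj_iff μ (show i + (a : ℕ) - 1 < i + (b : ℕ) - 1 by omega),
        GWAdj_iff w hab, hlet]
      cases hc : w.getD ((b : ℕ) - 1) false <;> simp [hc] <;> omega
  refine ⟨⟨⟨f, hinj⟩, ?_⟩⟩
  intro a b
  show GmuAdj μ (f a) (f b) ↔ GWAdj w a b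
  rcases lt_trichotomy ((a : ℕ)) ((b : ℕ)) with h | h | h
  · exact key a b h
  · have : a = b := Fin.ext h
    subst this
    constructor
    · intro hadj; exact absurd hadj ((Gmu μ).loopless.irrefl (f a))
    · intro hadj; exact absurd hadj ((GW w).loopless.irrefl a)
  · have h1 := key b a h
    constructor
    · intro hadj; exact Or.symm (h1.mp (Or.symm hadj))
    · intro hadj; exact Or.symm (h1.mpr (Or.symm hadj))
end

section
/- Let w = w₁…wₙ be a finite 0-1 word (n ≥ 1) and let G_w be the associated graph on {0,1,…,n}. If M is a nontrivial module of G_w (i.e., a module that is neither empty, nor a singleton, nor the whole vertex set), then M is one of the following four sets: {1,…,n}, or {0} ∪ {2,3,…,n}, or {0,n}, or {1,n}. -/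
lemma GW_adj_iff (w : List Bool) (x y : Fin (w.length + 1)) (h : (x : ℕ) < (y : ℕ)) :
    (GW w).Adj x y ↔ (w.getD ((y:ℕ)-1) false = true ↔ (y:ℕ) = (x:ℕ)+1) := by
  show GWAdj w x y ↔ _
  unfold GWAdj
  cases hb : w.getD ((y:ℕ)-1) false <;> simp [h, not_lt.mpr h.le]

lemma GW_same (w : List Bool) (M : Set (Fin (w.length + 1))) (hmod : IsModule (GW w) M)
    {x p q : Fin (w.length + 1)} (hx : x ∉ M) (hp : p ∈ M) (hq : q ∈ M) :
    ((GW w).Adj x p ↔ (GW w).Adj x q) := by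
  rcases hmod x hx with h | h
  · exact ⟨fun _ => h q hq, fun _ => h p hp⟩
  · exact ⟨fun hh => absurd hh (h p hp), fun hh => absurd hh (h q hq)⟩

/-- x below both p and q -/
lemma GW_key (w : List Bool) (M : Set (Fin (w.length + 1))) (hmod : IsModule (GW w) M)
    {x p q : Fin (w.length + 1)} (hx : x ∉ M) (hp : p ∈ M) (hq : q ∈ M)
    (hxp : (x:ℕ) < (p:ℕ)) (hxq : (x:ℕ) < (q:ℕ)) :
    ((w.getD ((p:ℕ)-1) false = true ↔ (p:ℕ) = (x:ℕ)+1) ↔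
     (w.getD ((q:ℕ)-1) false = true ↔ (q:ℕ) = (x:ℕ)+1)) := by
  have h := GW_same w M hmod hx hp hq
  rwa [GW_adj_iff w x p hxp, GW_adj_iff w x q hxq] at h

/-- x above both p and q -/
lemma GW_key' (w : List Bool) (M : Set (Fin (w.length + 1))) (hmod : IsModule (GW w) M)
    {x p q : Fin (w.length + 1)} (hx : x ∉ M) (hp : p ∈ M) (hq : q ∈ M)
    (hxp : (p:ℕ) < (x:ℕ)) (hxq : (q:ℕ) < (x:ℕ)) :
    ((w.getD ((x:ℕ)-1) false = true ↔ (x:ℕ) = (p:ℕ)+1) ↔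
     (w.getD ((x:ℕ)-1) false = true ↔ (x:ℕ) = (q:ℕ)+1)) := by
  have h := GW_same w M hmod hx hp hq
  rwa [(GW w).adj_comm x p, (GW w).adj_comm x q,
    GW_adj_iff w p x hxp, GW_adj_iff w q x hxq] at h

theorem stmt19 (w : List Bool) (hw : w ≠ []) (M : Set (Fin (w.length + 1)))
    (hmod : IsModule (GW w) M)
    (hne : M ≠ ∅) (hns : ¬ ∃ a, M = {a}) (hnu : M ≠ Set.univ) :
    M = {x : Fin (w.length + 1) | (x : ℕ) ≠ 0} ∨
    M = {x : Fin (w.length + 1) | (x : ℕ) = 0 ∨ 2 ≤ (x : ℕ)} ∨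
    M = {x : Fin (w.length + 1) | (x : ℕ) = 0 ∨ (x : ℕ) = w.length} ∨
    M = {x : Fin (w.length + 1) | (x : ℕ) = 1 ∨ (x : ℕ) = w.length} := by
  classical
  have hn1 : 1 ≤ w.length := List.length_pos_iff.mpr hw
  have hMne : M.Nonempty := Set.nonempty_iff_ne_empty.mpr hne
  obtain ⟨a, haM, hamin⟩ := Set.exists_min_image M id M.toFinite hMne
  have hM'ne : (M \ {a}).Nonempty := by
    rw [Set.nonempty_iff_ne_empty]
    intro h
    exact hns ⟨a, Set.Subset.antisymm (Set.diff_eq_empty.mp h)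
      (Set.singleton_subset_iff.mpr haM)⟩
  obtain ⟨b, hbM', hbmin⟩ := Set.exists_min_image (M \ {a}) id (M \ {a}).toFinite hM'ne
  obtain ⟨hbM, hba⟩ := hbM'
  have hba' : b ≠ a := by simpa using hba
  have hab : (a:ℕ) < (b:ℕ) := by
    have h := hamin b hbM
    simp only [id] at h
    rcases Nat.lt_or_ge (a:ℕ) (b:ℕ) with h' | h'
    · exact h'
    · exact absurd (Fin.ext (le_antisymm h' (Fin.le_def.mp h))) hba'
  have hbn : (b:ℕ) ≤ w.length := Nat.lt_succ_iff.mp b.isLt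
  -- upward step
  have hstep : ∀ y : Fin (w.length + 1), y ∈ M → (a:ℕ) < (y:ℕ) →
      ∀ h : (y:ℕ)+1 < w.length+1, (⟨(y:ℕ)+1, h⟩ : Fin (w.length+1)) ∈ M := by
    intro y hyM hay h
    by_contra hc
    have K := GW_key' w M hmod hc haM hyM (by simp only [Fin.val_mk]; omega) (by simp only [Fin.val_mk]; omega)
    simp only [Fin.val_mk] at K
    generalize w.getD ((y:ℕ)+1-1) false = t at K
    cases t <;> simp at K <;> omega
  -- upward closure
  have hup : ∀ y : Fin (w.length + 1), (b:ℕ) ≤ (y:ℕ) → y ∈ M := by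
    have aux : ∀ k, (b:ℕ) ≤ k → ∀ h : k < w.length+1, (⟨k, h⟩ : Fin (w.length+1)) ∈ M := by
      intro k
      induction k with
      | zero => intro hk; omega
      | succ k ih =>
        intro hk h
        rcases Nat.lt_or_ge k (b:ℕ) with hkb | hkb
        · have : (⟨k+1, h⟩ : Fin (w.length+1)) = b := Fin.ext (by simp only [Fin.val_mk]; omega)
          rw [this]; exact hbM
        · have hkM := ih hkb (by omega)
          exact hstep ⟨k, by omega⟩ hkM (by simp only [Fin.val_mk]; omega) (by simp only [Fin.val_mk]; omega)
    intro y hy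
    have := aux (y:ℕ) hy y.isLt
    simpa using this
  -- membership characterization
  have hM : ∀ y : Fin (w.length + 1), y ∈ M ↔ (y = a ∨ (b:ℕ) ≤ (y:ℕ)) := by
    intro y
    constructor
    · intro hy
      by_cases hya : y = a
      · exact Or.inl hya
      · right
        have hh := hbmin y ⟨hy, by simpa using hya⟩
        simp only [id] at hh
        exact Fin.le_def.mp hh
    · rintro (rfl | hby)
      · exact haM
      · exact hup y hby
  have hnotM : ∀ y : Fin (w.length+1), (y:ℕ) ≠ (a:ℕ) → (y:ℕ) < (b:ℕ) → y ∉ M := by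
    intro y h1 h2 hy
    rcases (hM y).mp hy with h | h
    · exact h1 (by rw [h])
    · omega
  -- C1 : a ≤ 1
  have hC1 : (a:ℕ) ≤ 1 := by
    by_contra hc
    push_neg at hc
    have hx1 : (⟨(a:ℕ)-1, by omega⟩ : Fin (w.length+1)) ∉ M :=
      hnotM _ (by simp only [Fin.val_mk]; omega) (by simp only [Fin.val_mk]; omega)
    have hx2 : (⟨(a:ℕ)-2, by omega⟩ : Fin (w.length+1)) ∉ M :=
      hnotM _ (by simp only [Fin.val_mk]; omega) (by simp only [Fin.val_mk]; omega)
    have K1 := GW_key w M hmod hx1 haM hbM (by simp only [Fin.val_mk]; omega) (by simp only [Fin.val_mk]; omega)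
    have K2 := GW_key w M hmod hx2 haM hbM (by simp only [Fin.val_mk]; omega) (by simp only [Fin.val_mk]; omega)
    simp only [Fin.val_mk] at K1 K2
    generalize w.getD ((a:ℕ)-1) false = ta at K1 K2
    generalize w.getD ((b:ℕ)-1) false = tb at K1 K2
    cases ta <;> cases tb <;> simp at K1 K2 <;> omega
  -- C2 : b ≥ 3 → b = n
  have hC2 : 3 ≤ (b:ℕ) → (b:ℕ) = w.length := by
    intro hb3
    by_contra hc
    have hbn' : (b:ℕ) + 1 ≤ w.length := by omega
    have hcM : (⟨(b:ℕ)+1, by omega⟩ : Fin (w.length+1)) ∈ M := hup _ (by simp)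
    have hx : (⟨(b:ℕ)-1, by omega⟩ : Fin (w.length+1)) ∉ M :=
      hnotM _ (by simp only [Fin.val_mk]; omega) (by simp only [Fin.val_mk]; omega)
    have hx' : (⟨1-(a:ℕ), by omega⟩ : Fin (w.length+1)) ∉ M :=
      hnotM _ (by simp only [Fin.val_mk]; omega) (by simp only [Fin.val_mk]; omega)
    have K1 := GW_key w M hmod hx hbM hcM (by simp only [Fin.val_mk]; omega) (by simp only [Fin.val_mk]; omega)
    have K2 := GW_key w M hmod hx' hbM hcM (by simp only [Fin.val_mk]; omega) (by simp only [Fin.val_mk]; omega)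
    simp only [Fin.val_mk] at K1 K2
    have ee : (b:ℕ)+1-1 = (b:ℕ) := by omega
    rw [ee] at K1 K2
    generalize w.getD ((b:ℕ)-1) false = tb at K1 K2
    generalize w.getD (b:ℕ) false = tc at K1 K2
    cases tb <;> cases tc <;> simp at K1 K2 <;> omega
  -- final case analysis
  have ha01 : (a:ℕ) = 0 ∨ (a:ℕ) = 1 := by omega
  rcases ha01 with ha0 | ha1
  · rcases Nat.lt_or_ge (b:ℕ) 3 with hblt | hbge
    · interval_cases hb : (b:ℕ)
      · omega
      · -- b = 1 : M = univ, contradiction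
        exfalso
        apply hnu
        ext y
        simp only [Set.mem_univ, iff_true]
        rw [hM y]
        rcases Nat.eq_zero_or_pos (y:ℕ) with h | h
        · exact Or.inl (Fin.ext (by omega))
        · exact Or.inr (by omega)
      · -- b = 2 : candidate 2
        right; left
        ext y
        rw [hM y, Set.mem_setOf_eq, Fin.ext_iff]
        omega
    · have hbn2 : (b:ℕ) = w.length := hC2 hbge
      right; right; left
      ext y
      rw [hM y, Set.mem_setOf_eq, Fin.ext_iff]
      have := y.isLt
      omega
  · rcases Nat.lt_or_ge (b:ℕ) 3 with hblt | hbge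
    · have hb2 : (b:ℕ) = 2 := by omega
      left
      ext y
      rw [hM y, Set.mem_setOf_eq, Fin.ext_iff]
      omega
    · have hbn2 : (b:ℕ) = w.length := hC2 hbge
      right; right; right
      ext y
      rw [hM y, Set.mem_setOf_eq, Fin.ext_iff]
      have := y.isLt
      omega
end
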